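/- arXiv:2401.13238 — 6 statements merged into one kernel-verified Lean document; each statement's English description precedes it below -/
import Mathlib

section
/- Let X2, X3, X4, X5, X7 be i.i.d. Exponential(1) random variables. Then P(X3 < X4, X3 < X5, X2 + X3 < X4 + X7, X2 + X3 < X5 + X7) = 2/9. -/
open MeasureTheory ProbabilityTheory Real Set
open scoped ENNReal

lemma aux_integral_exp_neg_mul {b : ℝ} (hb : 0 < b) (c : ℝ) :
    ∫ x in Ioi c, Real.exp (-(b * x)) = Real.exp (-(b * c)) / b := by
  have hderiv : ∀ x ∈ Ici c, HasDerivAt (fun a => -Real.exp (-(b * a)) / b)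
      (Real.exp (-(b * x))) x := by
    intro x _
    have := (hasDerivAt_neg_exp_mul_exp (r := b) (x := x)).div_const b
    simpa [mul_div_assoc, mul_div_cancel_left₀ _ hb.ne'] using this
  have hint : IntegrableOn (fun x => Real.exp (-(b * x))) (Ioi c) := by
    simpa [neg_mul] using exp_neg_integrableOn_Ioi c hb
  have htend : Filter.Tendsto (fun a => -Real.exp (-(b * a)) / b) Filter.atTop (nhds 0) := by
    have h1 : Filter.Tendsto (fun a : ℝ => -(b * a)) Filter.atTop Filter.atBot := by
      apply Filter.tendsto_neg_atBot_iff.mpr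
      exact Filter.Tendsto.const_mul_atTop hb Filter.tendsto_id
    have h2 : Filter.Tendsto (fun a => Real.exp (-(b * a))) Filter.atTop (nhds 0) :=
      Real.tendsto_exp_atBot.comp h1
    simpa using (h2.neg.div_const b)
  have := integral_Ioi_of_hasDerivAt_of_tendsto' hderiv hint htend
  rw [this]; ring

lemma expMeasure_eq : expMeasure 1 = volume.withDensity (exponentialPDF 1) := rfl

lemma exp_ae_nonneg : ∀ᵐ x ∂(expMeasure 1), 0 ≤ x := by
  rw [MeasureTheory.ae_iff]
  have : {x : ℝ | ¬ 0 ≤ x} = Iio 0 := by ext x; simp [not_le]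
  rw [this, expMeasure_eq, withDensity_apply _ measurableSet_Iio]
  exact lintegral_exponentialPDF_of_nonpos le_rfl

lemma expMeasure_Ioi {m : ℝ} (hm : 0 ≤ m) :
    expMeasure 1 (Ioi m) = ENNReal.ofReal (Real.exp (-m)) := by
  rw [expMeasure_eq, withDensity_apply _ measurableSet_Ioi]
  have h1 : ∀ x ∈ Ioi m, exponentialPDF 1 x = ENNReal.ofReal (Real.exp (-x)) := by
    intro x hx
    rw [exponentialPDF_of_nonneg (hm.trans hx.out.le)]
    norm_num
  rw [setLIntegral_congr_fun_ae measurableSet_Ioi (Filter.Eventually.of_forall h1)]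
  have hint : IntegrableOn (fun x => Real.exp (-x)) (Ioi m) := by
    simpa using exp_neg_integrableOn_Ioi m one_pos
  rw [← ofReal_integral_eq_lintegral_ofReal hint
    (Filter.Eventually.of_forall fun x => (Real.exp_pos _).le), integral_exp_neg_Ioi]

lemma lintegral_expMeasure (g : ℝ → ℝ≥0∞) (hg : Measurable g) :
    ∫⁻ x, g x ∂(expMeasure 1)
      = ∫⁻ x in Ioi 0, ENNReal.ofReal (Real.exp (-x)) * g x := by
  rw [expMeasure_eq, lintegral_withDensity_eq_lintegral_mul _
    (show Measurable (exponentialPDF 1) from (measurable_exponentialPDFReal 1).ennreal_ofReal) hg]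
  simp only [Pi.mul_apply]
  rw [← lintegral_add_compl (fun x => exponentialPDF 1 x * g x) (measurableSet_Ioi (a := (0:ℝ)))]
  have h0 : ∫⁻ x in (Ioi (0:ℝ))ᶜ, exponentialPDF 1 x * g x = 0 := by
    rw [compl_Ioi]
    rw [← setLIntegral_congr (Iio_ae_eq_Iic (a := (0:ℝ)))]
    have : ∀ x ∈ Iio (0:ℝ), exponentialPDF 1 x * g x = 0 := by
      intro x hx; rw [exponentialPDF_of_neg hx.out, zero_mul]
    rw [setLIntegral_congr_fun_ae measurableSet_Iio (Filter.Eventually.of_forall this)]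
    simp
  rw [h0, add_zero]
  refine setLIntegral_congr_fun_ae measurableSet_Ioi (Filter.Eventually.of_forall ?_)
  intro x hx
  rw [exponentialPDF_of_nonneg hx.out.le]
  norm_num

instance : IsProbabilityMeasure (expMeasure 1) := isProbabilityMeasure_expMeasure one_pos

lemma measurePreserving_aux :
    MeasurePreserving
      (fun p : ℝ × ℝ × ℝ × ℝ × ℝ =>
        (![p.1, p.2.1, p.2.2.2.2, p.2.2.2.1, p.2.2.1] : Fin 5 → ℝ))
      ((expMeasure 1).prod ((expMeasure 1).prod ((expMeasure 1).prod
        ((expMeasure 1).prod (expMeasure 1)))))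
      (Measure.pi fun _ : Fin 5 => expMeasure 1) := by
  have hmeas : Measurable (fun p : ℝ × ℝ × ℝ × ℝ × ℝ =>
      (![p.1, p.2.1, p.2.2.2.2, p.2.2.2.1, p.2.2.1] : Fin 5 → ℝ)) := by
    refine measurable_pi_lambda _ fun i => ?_
    fin_cases i <;> simp <;> fun_prop
  refine ⟨hmeas, ?_⟩
  refine (Measure.pi_eq (μ := fun _ : Fin 5 => expMeasure 1) fun s hs => ?_).symm
  rw [Measure.map_apply hmeas (MeasurableSet.univ_pi hs)]
  have hpre : (fun p : ℝ × ℝ × ℝ × ℝ × ℝ =>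
      (![p.1, p.2.1, p.2.2.2.2, p.2.2.2.1, p.2.2.1] : Fin 5 → ℝ)) ⁻¹' (Set.pi univ s)
      = s 0 ×ˢ (s 1 ×ˢ (s 4 ×ˢ (s 3 ×ˢ s 2))) := by
    ext ⟨a, b, t, d, c⟩
    simp [Set.mem_pi, Fin.forall_fin_succ, and_assoc]
    tauto
  rw [hpre, Measure.prod_prod, Measure.prod_prod, Measure.prod_prod, Measure.prod_prod,
    Fin.prod_univ_five]
  ring

lemma h1 (a b t : ℝ) (hb : 0 ≤ b) :
    ((expMeasure 1).prod (expMeasure 1))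
      {q : ℝ × ℝ | b < q.2 ∧ b < q.1 ∧ a + b < q.2 + t ∧ a + b < q.1 + t}
      = (ENNReal.ofReal (Real.exp (-(max b (a + b - t))))) ^ 2 := by
  have hset : {q : ℝ × ℝ | b < q.2 ∧ b < q.1 ∧ a + b < q.2 + t ∧ a + b < q.1 + t}
      = Ioi (max b (a + b - t)) ×ˢ Ioi (max b (a + b - t)) := by
    ext ⟨d, c⟩
    simp only [mem_setOf_eq, mem_prod, mem_Ioi, max_lt_iff, sub_lt_iff_lt_add]
    tauto
  rw [hset, Measure.prod_prod, expMeasure_Ioi (hb.trans (le_max_left _ _)), sq]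

lemma h2 (a b : ℝ) (ha : 0 ≤ a) (hb : 0 ≤ b) :
    ∫⁻ t, (ENNReal.ofReal (Real.exp (-(max b (a + b - t))))) ^ 2 ∂(expMeasure 1)
      = ENNReal.ofReal (2 * Real.exp (-(a + 2 * b)) - Real.exp (-(2 * a + 2 * b))) := by
  have hgm : Measurable fun t : ℝ => (ENNReal.ofReal (Real.exp (-(max b (a + b - t))))) ^ 2 := by
    fun_prop
  rw [lintegral_expMeasure _ hgm]
  have hpt : ∀ t : ℝ, ENNReal.ofReal (Real.exp (-t))
        * (ENNReal.ofReal (Real.exp (-(max b (a + b - t))))) ^ 2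
      = ENNReal.ofReal (Real.exp (-t) * Real.exp (-(max b (a + b - t))) ^ 2) := by
    intro t
    rw [ENNReal.ofReal_mul (Real.exp_pos _).le, ENNReal.ofReal_pow (Real.exp_pos _).le]
  simp only [hpt]
  have hcont : Continuous fun t : ℝ => Real.exp (-t) * Real.exp (-(max b (a + b - t))) ^ 2 := by
    fun_prop
  have hint : IntegrableOn (fun t : ℝ => Real.exp (-t) * Real.exp (-(max b (a + b - t))) ^ 2)
      (Ioi 0) := by
    refine Integrable.mono' (g := fun t => Real.exp (-t))
      (by exact (by simpa using exp_neg_integrableOn_Ioi (0:ℝ) one_pos :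
        IntegrableOn (fun t : ℝ => Real.exp (-t)) (Ioi 0)))
      hcont.aestronglyMeasurable ?_
    refine (ae_restrict_iff' measurableSet_Ioi).mpr (Filter.Eventually.of_forall fun t ht => ?_)
    have h1 : Real.exp (-(max b (a + b - t))) ≤ 1 := by
      rw [Real.exp_le_one_iff]
      have := le_max_left b (a + b - t)
      linarith
    have h2 : (0:ℝ) ≤ Real.exp (-(max b (a + b - t))) ^ 2 := sq_nonneg _
    rw [Real.norm_eq_abs, abs_of_nonneg (by positivity)]
    exact mul_le_of_le_one_right (Real.exp_pos _).le
      (by nlinarith [Real.exp_pos (-(max b (a + b - t)))])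
  rw [← ofReal_integral_eq_lintegral_ofReal hint
    (Filter.Eventually.of_forall fun t => by positivity)]
  congr 1
  rw [← Ioc_union_Ioi_eq_Ioi ha,
    setIntegral_union (Ioc_disjoint_Ioi le_rfl) measurableSet_Ioi
      (hint.mono_set (by rw [← Ioc_union_Ioi_eq_Ioi ha]; exact subset_union_left))
      (hint.mono_set (by rw [← Ioc_union_Ioi_eq_Ioi ha]; exact subset_union_right))]
  have e1 : ∫ t in Ioc 0 a, Real.exp (-t) * Real.exp (-(max b (a + b - t))) ^ 2
      = Real.exp (-(2 * a + 2 * b)) * (Real.exp a - 1) := by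
    rw [setIntegral_congr_fun measurableSet_Ioc
      (show ∀ t ∈ Ioc 0 a, Real.exp (-t) * Real.exp (-(max b (a + b - t))) ^ 2
        = Real.exp (-(2 * a + 2 * b)) * Real.exp t from fun t ht => by
          rw [max_eq_right (by linarith [ht.2] : b ≤ a + b - t)]
          simp only [sq, ← Real.exp_add]
          rw [Real.exp_eq_exp]; ring)]
    rw [integral_const_mul, ← intervalIntegral.integral_of_le ha, integral_exp, Real.exp_zero]
  have e2 : ∫ t in Ioi a, Real.exp (-t) * Real.exp (-(max b (a + b - t))) ^ 2
      = Real.exp (-(2 * b)) * Real.exp (-a) := by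
    rw [setIntegral_congr_fun measurableSet_Ioi
      (show ∀ t ∈ Ioi a, Real.exp (-t) * Real.exp (-(max b (a + b - t))) ^ 2
        = Real.exp (-(2 * b)) * Real.exp (-t) from fun t ht => by
          rw [max_eq_left (by linarith [ht.out] : a + b - t ≤ b)]
          simp only [sq, ← Real.exp_add]
          rw [Real.exp_eq_exp]; ring)]
    rw [integral_const_mul, integral_exp_neg_Ioi]
  rw [e1, e2]
  have hy : Real.exp (-(2 * a + 2 * b)) * Real.exp a = Real.exp (-(a + 2 * b)) := by
    rw [← Real.exp_add]; congr 1; ring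
  have hz : Real.exp (-(2 * b)) * Real.exp (-a) = Real.exp (-(a + 2 * b)) := by
    rw [← Real.exp_add]; congr 1; ring
  rw [mul_sub, mul_one, hy, hz]; ring

lemma h3 (a : ℝ) (ha : 0 ≤ a) :
    ∫⁻ b, ENNReal.ofReal (2 * Real.exp (-(a + 2 * b)) - Real.exp (-(2 * a + 2 * b)))
        ∂(expMeasure 1)
      = ENNReal.ofReal ((2 * Real.exp (-a) - Real.exp (-(2 * a))) * (1 / 3)) := by
  rw [lintegral_expMeasure _ (Measurable.ennreal_ofReal (by fun_prop))]
  have hpt : ∀ b : ℝ, ENNReal.ofReal (Real.exp (-b))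
        * ENNReal.ofReal (2 * Real.exp (-(a + 2 * b)) - Real.exp (-(2 * a + 2 * b)))
      = ENNReal.ofReal ((2 * Real.exp (-a) - Real.exp (-(2 * a))) * Real.exp (-(3 * b))) := by
    intro b
    rw [← ENNReal.ofReal_mul (Real.exp_pos _).le]
    congr 1
    have e1 : Real.exp (-b) * Real.exp (-(a + 2 * b))
        = Real.exp (-a) * Real.exp (-(3 * b)) := by
      rw [← Real.exp_add, ← Real.exp_add]; congr 1; ring
    have e2 : Real.exp (-b) * Real.exp (-(2 * a + 2 * b))
        = Real.exp (-(2 * a)) * Real.exp (-(3 * b)) := by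
      rw [← Real.exp_add, ← Real.exp_add]; congr 1; ring
    nlinarith [e1, e2]
  simp only [hpt]
  have hint : IntegrableOn (fun b : ℝ =>
      (2 * Real.exp (-a) - Real.exp (-(2 * a))) * Real.exp (-(3 * b))) (Ioi 0) := by
    have base : IntegrableOn (fun b : ℝ => Real.exp (-(3 * b))) (Ioi 0) := by
      simpa [neg_mul] using exp_neg_integrableOn_Ioi (0:ℝ) (by norm_num : (0:ℝ) < 3)
    exact base.const_mul _
  have hnn : (0:ℝ) ≤ 2 * Real.exp (-a) - Real.exp (-(2 * a)) := by
    have : Real.exp (-(2 * a)) ≤ Real.exp (-a) := Real.exp_le_exp.mpr (by linarith)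
    linarith [Real.exp_pos (-a)]
  rw [← ofReal_integral_eq_lintegral_ofReal hint
    (Filter.Eventually.of_forall fun b => by positivity)]
  rw [integral_const_mul, aux_integral_exp_neg_mul (by norm_num : (0:ℝ) < 3) 0]
  norm_num

lemma h4 :
    ∫⁻ a, ENNReal.ofReal ((2 * Real.exp (-a) - Real.exp (-(2 * a))) * (1 / 3))
        ∂(expMeasure 1) = 2 / 9 := by
  rw [lintegral_expMeasure _ (Measurable.ennreal_ofReal (by fun_prop))]
  have hpt : ∀ a : ℝ, ENNReal.ofReal (Real.exp (-a))
        * ENNReal.ofReal ((2 * Real.exp (-a) - Real.exp (-(2 * a))) * (1 / 3))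
      = ENNReal.ofReal ((2 / 3) * Real.exp (-(2 * a)) - (1 / 3) * Real.exp (-(3 * a))) := by
    intro a
    rw [← ENNReal.ofReal_mul (Real.exp_pos _).le]
    congr 1
    have e1 : Real.exp (-a) * Real.exp (-a) = Real.exp (-(2 * a)) := by
      rw [← Real.exp_add]; congr 1; ring
    have e2 : Real.exp (-a) * Real.exp (-(2 * a)) = Real.exp (-(3 * a)) := by
      rw [← Real.exp_add]; congr 1; ring
    nlinarith [e1, e2]
  simp only [hpt]
  have i2 : IntegrableOn (fun a : ℝ => Real.exp (-(2 * a))) (Ioi 0) := by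
    simpa [neg_mul] using exp_neg_integrableOn_Ioi (0:ℝ) (by norm_num : (0:ℝ) < 2)
  have i3 : IntegrableOn (fun a : ℝ => Real.exp (-(3 * a))) (Ioi 0) := by
    simpa [neg_mul] using exp_neg_integrableOn_Ioi (0:ℝ) (by norm_num : (0:ℝ) < 3)
  have hint : IntegrableOn (fun a : ℝ =>
      (2 / 3) * Real.exp (-(2 * a)) - (1 / 3) * Real.exp (-(3 * a))) (Ioi 0) :=
    (i2.const_mul _).sub (i3.const_mul _)
  have hnn : ∀ a ∈ Ioi (0:ℝ),
      (0:ℝ) ≤ (2 / 3) * Real.exp (-(2 * a)) - (1 / 3) * Real.exp (-(3 * a)) := by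
    intro a ha
    have : Real.exp (-(3 * a)) ≤ Real.exp (-(2 * a)) := Real.exp_le_exp.mpr (by nlinarith [ha.out])
    nlinarith [Real.exp_pos (-(2 * a))]
  rw [← ofReal_integral_eq_lintegral_ofReal hint
    ((ae_restrict_iff' measurableSet_Ioi).mpr (Filter.Eventually.of_forall hnn))]
  rw [integral_sub (i2.const_mul _) (i3.const_mul _), integral_const_mul, integral_const_mul,
    aux_integral_exp_neg_mul (by norm_num : (0:ℝ) < 2) 0,
    aux_integral_exp_neg_mul (by norm_num : (0:ℝ) < 3) 0]
  norm_num
  rw [show (2:ℝ)/9 = (2:ℝ)/9 from rfl, ENNReal.ofReal_div_of_pos (by norm_num)]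
  norm_num


/-- For `X2, X3, X4, X5, X7` i.i.d. Exponential(1) (modeled as the five
coordinates of the product of exponential measures, with coordinate `0 = X2`, `1 = X3`,
`2 = X4`, `3 = X5`, `4 = X7`),
`P(X3 < X4, X3 < X5, X2 + X3 < X4 + X7, X2 + X3 < X5 + X7) = 2/9`. -/
theorem stmt_1 :
    (Measure.pi fun _ : Fin 5 => expMeasure 1)
      {x | x 1 < x 2 ∧ x 1 < x 3 ∧ x 0 + x 1 < x 2 + x 4 ∧ x 0 + x 1 < x 3 + x 4}
      = 2 / 9 := by
  have hS : MeasurableSet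
      {x : Fin 5 → ℝ | x 1 < x 2 ∧ x 1 < x 3 ∧ x 0 + x 1 < x 2 + x 4 ∧ x 0 + x 1 < x 3 + x 4} := by
    simp only [Set.setOf_and]
    refine MeasurableSet.inter ?_ (MeasurableSet.inter ?_ (MeasurableSet.inter ?_ ?_)) <;>
      · apply measurableSet_lt <;> fun_prop
  have hmeas2 : MeasurableSet {q : ℝ × ℝ × ℝ × ℝ × ℝ |
      q.2.1 < q.2.2.2.2 ∧ q.2.1 < q.2.2.2.1 ∧ q.1 + q.2.1 < q.2.2.2.2 + q.2.2.1 ∧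
        q.1 + q.2.1 < q.2.2.2.1 + q.2.2.1} := by
    simp only [Set.setOf_and]
    refine MeasurableSet.inter ?_ (MeasurableSet.inter ?_ (MeasurableSet.inter ?_ ?_)) <;>
      · apply measurableSet_lt <;> fun_prop
  have hmeas4 : ∀ a : ℝ, MeasurableSet {q : ℝ × ℝ × ℝ × ℝ |
      q.1 < q.2.2.2 ∧ q.1 < q.2.2.1 ∧ a + q.1 < q.2.2.2 + q.2.1 ∧
        a + q.1 < q.2.2.1 + q.2.1} := by
    intro a
    simp only [Set.setOf_and]
    refine MeasurableSet.inter ?_ (MeasurableSet.inter ?_ (MeasurableSet.inter ?_ ?_)) <;>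
      · apply measurableSet_lt <;> fun_prop
  have hmeas3 : ∀ a b : ℝ, MeasurableSet {r : ℝ × ℝ × ℝ |
      b < r.2.2 ∧ b < r.2.1 ∧ a + b < r.2.2 + r.1 ∧ a + b < r.2.1 + r.1} := by
    intro a b
    simp only [Set.setOf_and]
    refine MeasurableSet.inter ?_ (MeasurableSet.inter ?_ (MeasurableSet.inter ?_ ?_)) <;>
      · apply measurableSet_lt <;> fun_prop
  have g3 : ∀ a b : ℝ, 0 ≤ a → 0 ≤ b →
      ((expMeasure 1).prod ((expMeasure 1).prod (expMeasure 1)))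
        {r : ℝ × ℝ × ℝ | b < r.2.2 ∧ b < r.2.1 ∧ a + b < r.2.2 + r.1 ∧ a + b < r.2.1 + r.1}
      = ENNReal.ofReal (2 * Real.exp (-(a + 2 * b)) - Real.exp (-(2 * a + 2 * b))) := by
    intro a b ha hb
    rw [Measure.prod_apply (hmeas3 a b)]
    refine (lintegral_congr fun t => ?_).trans (h2 a b ha hb)
    exact h1 a b t hb
  have g4 : ∀ a : ℝ, 0 ≤ a →
      ((expMeasure 1).prod ((expMeasure 1).prod ((expMeasure 1).prod (expMeasure 1))))
        {q : ℝ × ℝ × ℝ × ℝ | q.1 < q.2.2.2 ∧ q.1 < q.2.2.1 ∧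
          a + q.1 < q.2.2.2 + q.2.1 ∧ a + q.1 < q.2.2.1 + q.2.1}
      = ENNReal.ofReal ((2 * Real.exp (-a) - Real.exp (-(2 * a))) * (1 / 3)) := by
    intro a ha
    rw [Measure.prod_apply (hmeas4 a)]
    refine (lintegral_congr_ae (exp_ae_nonneg.mono fun b hb => ?_)).trans (h3 a ha)
    exact g3 a b ha hb
  rw [← measurePreserving_aux.measure_preimage hS.nullMeasurableSet]
  have hpre : (fun p : ℝ × ℝ × ℝ × ℝ × ℝ =>
      (![p.1, p.2.1, p.2.2.2.2, p.2.2.2.1, p.2.2.1] : Fin 5 → ℝ)) ⁻¹'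
      {x : Fin 5 → ℝ | x 1 < x 2 ∧ x 1 < x 3 ∧ x 0 + x 1 < x 2 + x 4 ∧ x 0 + x 1 < x 3 + x 4}
      = {q : ℝ × ℝ × ℝ × ℝ × ℝ |
          q.2.1 < q.2.2.2.2 ∧ q.2.1 < q.2.2.2.1 ∧ q.1 + q.2.1 < q.2.2.2.2 + q.2.2.1 ∧
            q.1 + q.2.1 < q.2.2.2.1 + q.2.2.1} := by
    ext ⟨a, b, t, d, c⟩
    simp [Fin.isValue]
  rw [hpre, Measure.prod_apply hmeas2]
  refine (lintegral_congr_ae (exp_ae_nonneg.mono fun a ha => ?_)).trans h4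
  exact g4 a ha
end

section
/- Let X2, X3, X4, X5, X7 be i.i.d. Uniform[0,1] random variables. Then P(X3 < X4, X3 < X5, X2 + X3 < X4 + X7, X2 + X3 < X5 + X7) = 7/30. -/
open MeasureTheory Set
open scoped ENNReal


noncomputable abbrev ν : Measure ℝ := volume.restrict (Icc (0:ℝ) 1)

lemma ofReal_max (x : ℝ) : ENNReal.ofReal x = ENNReal.ofReal (max x 0) := by
  rcases le_total x 0 with h | h
  · simp [max_eq_right h, ENNReal.ofReal_eq_zero.2 h]
  · simp [max_eq_left h]

lemma nu_Ioi (m : ℝ) (hm : 0 ≤ m) : ν (Ioi m) = ENNReal.ofReal (1 - m) := by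
  rw [Measure.restrict_apply measurableSet_Ioi]
  have : Ioi m ∩ Icc 0 1 = Ioc m 1 := by
    ext t
    simp only [mem_inter_iff, mem_Ioi, mem_Icc, mem_Ioc]
    constructor
    · rintro ⟨h1, _, h3⟩; exact ⟨h1, h3⟩
    · rintro ⟨h1, h2⟩; exact ⟨h1, le_of_lt (lt_of_le_of_lt hm h1), h2⟩
  rw [this, Real.volume_Ioc]

lemma lint_ofReal (h : ℝ → ℝ) (hc : Continuous h) (hnn : ∀ x ∈ Icc (0:ℝ) 1, 0 ≤ h x) :
    ∫⁻ x, ENNReal.ofReal (h x) ∂ν = ENNReal.ofReal (∫ x in (0:ℝ)..1, h x) := by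
  rw [intervalIntegral.integral_of_le zero_le_one, ← integral_Icc_eq_integral_Ioc]
  exact (ofReal_integral_eq_lintegral_ofReal (hc.integrableOn_Icc)
    ((ae_restrict_iff' measurableSet_Icc).2 (ae_of_all _ hnn))).symm

lemma step_d (a b c e : ℝ) (hb : 0 ≤ b) :
    ∫⁻ d, (if b < c ∧ b < d ∧ a + b < c + e ∧ a + b < d + e then (1:ℝ≥0∞) else 0) ∂ν
      = if b < c ∧ a + b < c + e then ENNReal.ofReal (1 - max b (a + b - e)) else 0 := by
  by_cases hP : b < c ∧ a + b < c + e
  · rw [if_pos hP]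
    have key : ∀ d : ℝ, (if b < c ∧ b < d ∧ a + b < c + e ∧ a + b < d + e then (1:ℝ≥0∞) else 0)
        = (Ioi (max b (a + b - e))).indicator 1 d := by
      intro d
      have hiff : (b < c ∧ b < d ∧ a + b < c + e ∧ a + b < d + e) ↔ d ∈ Ioi (max b (a + b - e)) := by
        simp only [mem_Ioi, max_lt_iff, sub_lt_iff_lt_add]
        constructor
        · rintro ⟨_, h2, _, h4⟩; exact ⟨h2, h4⟩
        · rintro ⟨h2, h4⟩; exact ⟨hP.1, h2, hP.2, h4⟩
      simp only [indicator_apply, Pi.one_apply, mem_Ioi]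
      rw [mem_Ioi] at hiff
      exact if_congr hiff rfl rfl
    rw [lintegral_congr key]
    rw [lintegral_indicator_one measurableSet_Ioi, nu_Ioi _ (le_trans hb (le_max_left _ _))]
  · have : ∀ d : ℝ, (if b < c ∧ b < d ∧ a + b < c + e ∧ a + b < d + e then (1:ℝ≥0∞) else 0) = 0 := by
      intro d; rw [if_neg]; tauto
    simp_rw [this, lintegral_zero, if_neg hP]

lemma step_cd (a b e : ℝ) (hb : 0 ≤ b) :
    ∫⁻ c, (∫⁻ d, (if b < c ∧ b < d ∧ a + b < c + e ∧ a + b < d + e then (1:ℝ≥0∞) else 0) ∂ν) ∂ν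
      = ENNReal.ofReal (1 - (b + max (a - e) 0)) * ENNReal.ofReal (1 - (b + max (a - e) 0)) := by
  have hm : max b (a + b - e) = b + max (a - e) 0 := by
    rw [max_comm (a - e) 0, ← max_add_add_left b 0 (a - e)]
    congr 1 <;> ring
  have key : ∀ c : ℝ, (∫⁻ d, (if b < c ∧ b < d ∧ a + b < c + e ∧ a + b < d + e then (1:ℝ≥0∞) else 0) ∂ν)
      = ENNReal.ofReal (1 - (b + max (a - e) 0)) * (Ioi (max b (a + b - e))).indicator 1 c := by
    intro c
    rw [step_d a b c e hb, hm]
    have hiff : (b < c ∧ a + b < c + e) ↔ c ∈ Ioi (max b (a + b - e)) := by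
      simp only [mem_Ioi, max_lt_iff, sub_lt_iff_lt_add]
    rw [indicator_apply]
    simp only [Pi.one_apply]
    rw [if_congr hiff rfl rfl, hm]
    by_cases h : c ∈ Ioi (b + max (a - e) 0) <;> simp [h]
  rw [lintegral_congr key, lintegral_const_mul _ (measurable_one.indicator measurableSet_Ioi),
    lintegral_indicator_one measurableSet_Ioi, nu_Ioi _ (le_trans hb (le_max_left _ _)), hm]

lemma realB (s : ℝ) (hs0 : 0 ≤ s) (hs1 : s ≤ 1) :
    ∫ b in (0:ℝ)..1, (max (1 - (b + s)) 0 * max (1 - (b + s)) 0) = (1 - s)^3 / 3 := by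
  have hcont : Continuous fun b : ℝ => max (1 - (b + s)) 0 * max (1 - (b + s)) 0 := by continuity
  have h1 : (1:ℝ) - s ≤ 1 := by linarith
  have h0 : (0:ℝ) ≤ 1 - s := by linarith
  rw [← intervalIntegral.integral_add_adjacent_intervals
    (a := 0) (b := 1 - s) (c := 1) (hcont.intervalIntegrable _ _) (hcont.intervalIntegrable _ _)]
  have e1 : ∫ b in (0:ℝ)..(1 - s), (max (1 - (b + s)) 0 * max (1 - (b + s)) 0)
      = ∫ b in (0:ℝ)..(1 - s), ((1 - s) - b)^2 := by
    apply intervalIntegral.integral_congr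
    intro b hb
    rw [uIcc_of_le h0] at hb
    have : (0:ℝ) ≤ 1 - (b + s) := by have := hb.2; linarith
    show ((1 - (b + s)) ⊔ 0) * ((1 - (b + s)) ⊔ 0) = (1 - s - b) ^ 2
    rw [max_eq_left this]; ring
  have e2 : ∫ b in (1 - s:ℝ)..1, (max (1 - (b + s)) 0 * max (1 - (b + s)) 0) = 0 := by
    rw [intervalIntegral.integral_congr (g := fun _ => (0:ℝ)), intervalIntegral.integral_zero]
    intro b hb
    rw [uIcc_of_le h1] at hb
    have : 1 - (b + s) ≤ 0 := by have := hb.1; linarith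
    show ((1 - (b + s)) ⊔ 0) * ((1 - (b + s)) ⊔ 0) = 0
    rw [max_eq_right this, mul_zero]
  rw [e1, e2, add_zero]
  rw [show (fun b : ℝ => ((1 - s) - b)^2) = fun b => (fun x : ℝ => x^2) ((1-s) - b) from rfl,
    intervalIntegral.integral_comp_sub_left (fun x : ℝ => x^2) (1 - s)]
  simp only [sub_self, sub_zero]
  rw [integral_pow]
  norm_num

lemma step_b (a e : ℝ) (ha : a ∈ Icc (0:ℝ) 1) (he : e ∈ Icc (0:ℝ) 1) :
    ∫⁻ b, (∫⁻ c, (∫⁻ d, (if b < c ∧ b < d ∧ a + b < c + e ∧ a + b < d + e then (1:ℝ≥0∞) else 0) ∂ν) ∂ν) ∂ν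
      = ENNReal.ofReal ((1 - max (a - e) 0)^3 / 3) := by
  set s := max (a - e) 0 with hs
  have hs0 : 0 ≤ s := le_max_right _ _
  have hs1 : s ≤ 1 := max_le (by have := ha.2; have := he.1; linarith) zero_le_one
  have hcongr : ∫⁻ b, (∫⁻ c, (∫⁻ d, (if b < c ∧ b < d ∧ a + b < c + e ∧ a + b < d + e then (1:ℝ≥0∞) else 0) ∂ν) ∂ν) ∂ν
      = ∫⁻ b in Icc (0:ℝ) 1, ENNReal.ofReal (max (1 - (b + s)) 0 * max (1 - (b + s)) 0) := by
    apply setLIntegral_congr_fun measurableSet_Icc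
    intro b hb
    beta_reduce
    rw [step_cd a b e hb.1, ofReal_max (1 - (b + s)),
      ← ENNReal.ofReal_mul (le_max_right _ _)]
  rw [hcongr]
  have := lint_ofReal (fun b => max (1 - (b + s)) 0 * max (1 - (b + s)) 0)
    (by continuity) (fun x _ => mul_nonneg (le_max_right _ _) (le_max_right _ _))
  rw [this, realB s hs0 hs1]

lemma realD (a : ℝ) (h0 : 0 ≤ a) (h1 : a ≤ 1) :
    ∫ e in (0:ℝ)..1, (1 - max (a - e) 0)^3 / 3 = (1 - (1 - a)^4) / 12 + (1 - a) / 3 := by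
  have hcont : Continuous fun e : ℝ => (1 - max (a - e) 0)^3 / 3 := by continuity
  rw [← intervalIntegral.integral_add_adjacent_intervals
    (a := 0) (b := a) (c := 1) (hcont.intervalIntegrable _ _) (hcont.intervalIntegrable _ _)]
  have e1 : ∫ e in (0:ℝ)..a, (1 - max (a - e) 0)^3 / 3
      = ∫ e in (0:ℝ)..a, (fun u : ℝ => u^3 / 3) (e + (1 - a)) := by
    apply intervalIntegral.integral_congr
    intro e he
    rw [uIcc_of_le h0] at he
    have : (0:ℝ) ≤ a - e := by have := he.2; linarith
    show (1 - max (a - e) 0)^3 / 3 = (e + (1 - a))^3 / 3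
    rw [max_eq_left this]; ring_nf
  have e2 : ∫ e in (a:ℝ)..1, (1 - max (a - e) 0)^3 / 3 = (1 - a) * (1/3) := by
    rw [intervalIntegral.integral_congr (g := fun _ => (1:ℝ)/3)]
    · rw [intervalIntegral.integral_const, smul_eq_mul]
    · intro e he
      rw [uIcc_of_le h1] at he
      have : a - e ≤ 0 := by have := he.1; linarith
      show (1 - max (a - e) 0)^3 / 3 = 1/3
      rw [max_eq_right this]; norm_num
  rw [e1, e2, intervalIntegral.integral_comp_add_right (fun u : ℝ => u^3/3) (1 - a)]
  have : ∫ u in (0 + (1 - a):ℝ)..(a + (1 - a)), u^3/3 = ∫ u in (1 - a:ℝ)..1, u^3/3 := by norm_num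
  rw [this]
  have : ∫ u in (1 - a:ℝ)..1, u^3/3 = (1/3) * ∫ u in (1 - a:ℝ)..1, u^3 := by
    rw [← intervalIntegral.integral_const_mul]; congr 1; ext u; ring
  rw [this, integral_pow]
  ring

lemma realE : ∫ a in (0:ℝ)..1, ((1 - (1 - a)^4) / 12 + (1 - a) / 3) = 7/30 := by
  have c1 : Continuous fun a : ℝ => (1 - (1 - a)^4) / 12 := by continuity
  have c2 : Continuous fun a : ℝ => (1 - a) / 3 := by continuity
  rw [intervalIntegral.integral_add (c1.intervalIntegrable _ _) (c2.intervalIntegrable _ _)]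
  have e1 : ∫ a in (0:ℝ)..1, (1 - (1 - a)^4) / 12
      = (1/12) * ∫ a in (0:ℝ)..1, (1 - (1 - a)^4) := by
    rw [← intervalIntegral.integral_const_mul]; congr 1; ext a; ring
  have e2 : ∫ a in (0:ℝ)..1, (1 - (1 - a)^4)
      = (∫ a in (0:ℝ)..1, (1:ℝ)) - ∫ a in (0:ℝ)..1, (1 - a)^4 := by
    rw [← intervalIntegral.integral_sub (by apply Continuous.intervalIntegrable; continuity)
      (by apply Continuous.intervalIntegrable; continuity)]
  have e3 : ∫ a in (0:ℝ)..1, (1 - a)^4 = ∫ u in (0:ℝ)..1, u^4 := by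
    rw [show (fun a : ℝ => (1 - a)^4) = fun a => (fun u : ℝ => u^4) (1 - a) from rfl,
      intervalIntegral.integral_comp_sub_left (fun u : ℝ => u^4) 1]
    norm_num
  have e4 : ∫ a in (0:ℝ)..1, (1 - a) / 3 = (1/3) * ∫ a in (0:ℝ)..1, (1 - a) := by
    rw [← intervalIntegral.integral_const_mul]; congr 1; ext a; ring
  have e5 : ∫ a in (0:ℝ)..1, (1 - a) = ∫ u in (0:ℝ)..1, u := by
    rw [show (fun a : ℝ => (1 - a)) = fun a => (fun u : ℝ => u) (1 - a) from rfl,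
      intervalIntegral.integral_comp_sub_left (fun u : ℝ => u) 1]
    norm_num
  rw [e1, e2, e3, e4, e5, integral_pow, intervalIntegral.integral_const, integral_id]
  norm_num

lemma step_e (a : ℝ) (ha : a ∈ Icc (0:ℝ) 1) :
    ∫⁻ e, (∫⁻ b, (∫⁻ c, (∫⁻ d, (if b < c ∧ b < d ∧ a + b < c + e ∧ a + b < d + e then (1:ℝ≥0∞) else 0) ∂ν) ∂ν) ∂ν) ∂ν
      = ENNReal.ofReal ((1 - (1 - a)^4) / 12 + (1 - a) / 3) := by
  have hcongr : ∫⁻ e, (∫⁻ b, (∫⁻ c, (∫⁻ d, (if b < c ∧ b < d ∧ a + b < c + e ∧ a + b < d + e then (1:ℝ≥0∞) else 0) ∂ν) ∂ν) ∂ν) ∂ν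
      = ∫⁻ e in Icc (0:ℝ) 1, ENNReal.ofReal ((1 - max (a - e) 0)^3 / 3) :=
    setLIntegral_congr_fun measurableSet_Icc (fun e he => step_b a e ha he)
  rw [hcongr, lint_ofReal _ (by continuity) (fun e he => by
    have h1 : max (a - e) 0 ≤ 1 := max_le (by have := ha.2; have := he.1; linarith) zero_le_one
    have : (0:ℝ) ≤ (1 - max (a - e) 0)^3 := pow_nonneg (by linarith) 3
    linarith), realD a ha.1 ha.2]
instance : SigmaFinite ν := by unfold ν; infer_instance

def S : Set (Fin 5 → ℝ) := {x | x 1 < x 2 ∧ x 1 < x 3 ∧ x 0 + x 1 < x 2 + x 4 ∧ x 0 + x 1 < x 3 + x 4}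

lemma hS : MeasurableSet S := by
  have h : ∀ i : Fin 5, Measurable fun x : Fin 5 → ℝ => x i := fun i => measurable_pi_apply i
  simp only [S, setOf_and]
  exact (((measurableSet_lt (h 1) (h 2)).inter ((measurableSet_lt (h 1) (h 3)).inter
    ((measurableSet_lt ((h 0).add (h 1)) ((h 2).add (h 4))).inter
      (measurableSet_lt ((h 0).add (h 1)) ((h 3).add (h 4)))))))

lemma hf : Measurable (S.indicator (1 : (Fin 5 → ℝ) → ℝ≥0∞)) :=
  measurable_one.indicator hS

lemma stepA :
    (Measure.pi fun _ : Fin 5 => ν) S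
      = ∫⁻ a, (∫⁻ e, (∫⁻ b, (∫⁻ c, (∫⁻ d,
          S.indicator 1 (fun i : Fin 5 => if i = 0 then a else if i = 1 then b else if i = 2 then c else if i = 3 then d else e) ∂ν) ∂ν) ∂ν) ∂ν) ∂ν := by
  rw [← lintegral_indicator_one hS,
    lintegral_eq_lmarginal_univ (fun _ => (0:ℝ))]
  have huniv : (Finset.univ : Finset (Fin 5)) =
      insert 0 (insert 4 (insert 1 (insert 2 {3}))) := by decide
  rw [huniv]
  rw [lmarginal_insert _ hf (by decide)]
  congr 1; ext a
  rw [lmarginal_insert _ hf (by decide)]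
  congr 1; ext e
  rw [lmarginal_insert _ hf (by decide)]
  congr 1; ext b
  rw [lmarginal_insert _ hf (by decide)]
  congr 1; ext c
  rw [lmarginal_singleton]
  simp only []
  congr 1

lemma ind_eval (a b c d e : ℝ) :
    S.indicator (1 : (Fin 5 → ℝ) → ℝ≥0∞)
      (fun i : Fin 5 => if i = 0 then a else if i = 1 then b else if i = 2 then c else if i = 3 then d else e)
      = if b < c ∧ b < d ∧ a + b < c + e ∧ a + b < d + e then 1 else 0 := by
  classical
  rw [indicator_apply]
  have h : ((fun i : Fin 5 => if i = 0 then a else if i = 1 then b else if i = 2 then c else if i = 3 then d else e) ∈ S)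
      ↔ (b < c ∧ b < d ∧ a + b < c + e ∧ a + b < d + e) := by
    exact Iff.rfl
  simp [h]

/-- For `X2, X3, X4, X5, X7` i.i.d. Uniform[0,1] (modeled as the five
coordinates of the product of uniform measures on `[0,1]`, with coordinate `0 = X2`,
`1 = X3`, `2 = X4`, `3 = X5`, `4 = X7`),
`P(X3 < X4, X3 < X5, X2 + X3 < X4 + X7, X2 + X3 < X5 + X7) = 7/30`. -/
theorem stmt_2 :
    (Measure.pi fun _ : Fin 5 => volume.restrict (Icc (0 : ℝ) 1))
      {x | x 1 < x 2 ∧ x 1 < x 3 ∧ x 0 + x 1 < x 2 + x 4 ∧ x 0 + x 1 < x 3 + x 4}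
      = 7 / 30 := by
  have hset : {x : Fin 5 → ℝ | x 1 < x 2 ∧ x 1 < x 3 ∧ x 0 + x 1 < x 2 + x 4 ∧ x 0 + x 1 < x 3 + x 4} = S := rfl
  rw [hset]
  rw [show (Measure.pi fun _ : Fin 5 => volume.restrict (Icc (0:ℝ) 1)) = Measure.pi fun _ : Fin 5 => ν from rfl]
  rw [stepA]
  simp_rw [ind_eval]
  rw [show (∫⁻ a, (∫⁻ e, (∫⁻ b, (∫⁻ c, (∫⁻ d,
        (if b < c ∧ b < d ∧ a + b < c + e ∧ a + b < d + e then (1:ℝ≥0∞) else 0) ∂ν) ∂ν) ∂ν) ∂ν) ∂ν)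
      = ∫⁻ a in Icc (0:ℝ) 1, ENNReal.ofReal ((1 - (1 - a)^4) / 12 + (1 - a) / 3) from
    setLIntegral_congr_fun measurableSet_Icc (fun a ha => step_e a ha)]
  rw [lint_ofReal _ (by continuity) (fun a ha => by
    have h4 : (1 - a)^4 ≤ 1 := pow_le_one₀ (by linarith [ha.2]) (by linarith [ha.1])
    linarith [ha.1, ha.2]), realE]
  rw [ENNReal.ofReal_div_of_pos (by norm_num)]
  norm_num
end

section
/- For a cycle graph on n vertices (with both orientations of each edge given i.i.d. continuous weights and a fixed boundary vertex), the probability that the minimal spanning arborescence is any fixed one of the possible spanning arborescences does not depend on the continuous weight distribution, in the special case n = 3: on the directed triangle with one boundary vertex, the law of the MSA is the same for i.i.d. Exponential(1) weights and i.i.d. Uniform[0,1] weights. -/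
open MeasureTheory ProbabilityTheory Set

/-- A spanning arborescence of the directed triangle on vertices `{0, 1, 2}` with boundary
vertex `∂ = 2`: vertex `0` sends its unique outgoing edge to `a`, vertex `1` sends its
unique outgoing edge to `b`, there are no self-loops, and no directed cycle
(the only possible one being `0 → 1 → 0`). -/
def TriangleArb (a b : Fin 3) : Prop := a ≠ 0 ∧ b ≠ 1 ∧ ¬(a = 1 ∧ b = 0)

/-- The event (in the space of weights `w : Fin 3 × Fin 3 → ℝ` on oriented edges) that the
arborescence `{0 → a, 1 → b}` is the minimal spanning arborescence of the triangle with
boundary `2`, i.e. has strictly smaller total weight than every other spanning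
arborescence. -/
def TriangleMSAEvent (a b : Fin 3) : Set (Fin 3 × Fin 3 → ℝ) :=
  {w | ∀ a' b', TriangleArb a' b' → (a', b') ≠ (a, b) →
    w (0, a) + w (1, b) < w (0, a') + w (1, b')}

open scoped ENNReal

namespace Stmt5Aux

abbrev ι : Type := Fin 3 × Fin 3

variable (μ : Measure ℝ) [IsProbabilityMeasure μ] [NullSingletonClass μ]

/-- Permuting coordinates preserves the iid product measure. -/
lemma perm (e : ι ≃ ι) :
    MeasurePreserving (fun w : ι → ℝ => w ∘ e)
      (Measure.pi fun _ : ι => μ) (Measure.pi fun _ : ι => μ) := by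
  have hmeas : Measurable (fun w : ι → ℝ => w ∘ e) :=
    measurable_pi_lambda _ fun i => measurable_pi_apply (e i)
  refine ⟨hmeas, ?_⟩
  refine (Measure.pi_eq (μ := fun _ : ι => μ) fun s hs => ?_).symm
  rw [Measure.map_apply hmeas (MeasurableSet.univ_pi hs)]
  have hpre : (fun w : ι → ℝ => w ∘ e) ⁻¹' (univ.pi s) = univ.pi fun j => s (e.symm j) := by
    ext w
    simp only [mem_preimage, mem_univ_pi, Function.comp]
    exact ⟨fun h j => by simpa using h (e.symm j), fun h i => by simpa using h (e i)⟩
  rw [hpre, Measure.pi_pi]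
  exact Fintype.prod_equiv e.symm _ _ fun j => rfl

lemma pi_box_singleton_null {κ : Type*} [Fintype κ] [Nonempty κ] (ν : Measure ℝ)
    [IsProbabilityMeasure ν] [NullSingletonClass ν] (c : ℝ) :
    (Measure.pi fun _ : κ => ν) (univ.pi fun _ => {c}) = 0 := by
  rw [Measure.pi_pi]
  simp [measure_singleton, Fintype.card_ne_zero]

/-- The event that coordinate `i` equals a function of the other coordinates is null. -/
lemma tie (i : ι) (φ : (ι → ℝ) → ℝ) (hφm : Measurable φ)
    (hφ : ∀ w c, φ (Function.update w i c) = φ w) :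
    (Measure.pi fun _ : ι => μ) {w | w i = φ w} = 0 := by
  classical
  set p : ι → Prop := fun x => x = i with hp
  have hS : MeasurableSet {w : ι → ℝ | w i = φ w} :=
    measurableSet_eq_fun (measurable_pi_apply i) hφm
  have h := measurePreserving_piEquivPiSubtypeProd (fun _ : ι => μ) p
  set e := MeasurableEquiv.piEquivPiSubtypeProd (fun _ : ι => ℝ) p with he
  have h2 := (h.symm e).measure_preimage hS.nullMeasurableSet
  rw [← h2]
  have hsymm : ∀ (u : {x // p x} → ℝ) (v : {x // ¬ p x} → ℝ) (j : ι),
      e.symm (u, v) j = if h : p j then u ⟨j, h⟩ else v ⟨j, h⟩ := fun u v j => rfl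
  set G : ({x // ¬ p x} → ℝ) → ℝ := fun v => φ (e.symm (fun _ => 0, v)) with hG
  have key : ∀ (u : {x // p x} → ℝ) (v : {x // ¬ p x} → ℝ),
      φ (e.symm (u, v)) = G v := by
    intro u v
    have : e.symm (u, v) = Function.update (e.symm (fun _ => 0, v)) i (u ⟨i, rfl⟩) := by
      funext j
      by_cases hj : p j
      · have hj' : j = i := hj
        subst hj'
        rw [hsymm, Function.update_self]
        exact dif_pos rfl
      · have hj' : j ≠ i := hj
        rw [hsymm, Function.update_of_ne hj', hsymm, dif_neg hj, dif_neg hj]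
    rw [this, hφ]
  have hGm : Measurable G := by
    apply hφm.comp
    exact e.symm.measurable.comp (measurable_const.prodMk measurable_id)
  have hTset : ⇑e.symm ⁻¹' {w : ι → ℝ | w i = φ w}
      = {q : ({x // p x} → ℝ) × ({x // ¬ p x} → ℝ) | q.1 ⟨i, rfl⟩ = G q.2} := by
    ext ⟨u, v⟩
    simp only [mem_preimage, mem_setOf_eq, key]
    rw [show e.symm (u, v) i = u ⟨i, rfl⟩ from by rw [hsymm]; exact dif_pos rfl]
  rw [hTset]
  have hTm : MeasurableSet {q : ({x // p x} → ℝ) × ({x // ¬ p x} → ℝ) | q.1 ⟨i, rfl⟩ = G q.2} :=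
    measurableSet_eq_fun (measurable_fst.eval) (hGm.comp measurable_snd)
  rw [Measure.prod_apply_symm hTm]
  refine (lintegral_congr fun v => ?_).trans lintegral_zero
  haveI : Subsingleton (Subtype p) := ⟨fun a b => Subtype.ext (a.2.trans b.2.symm)⟩
  haveI hne : Nonempty (Subtype p) := ⟨⟨i, rfl⟩⟩
  have hset : ((fun u : Subtype p → ℝ => (u, v)) ⁻¹'
      {q : (Subtype p → ℝ) × ({x // ¬ p x} → ℝ) | q.1 ⟨i, rfl⟩ = G q.2})
      = univ.pi (fun _ => {G v}) := by
    ext u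
    simp only [mem_preimage, mem_setOf_eq, mem_univ_pi, mem_singleton_iff]
    constructor
    · intro h j; rw [Subsingleton.elim j (⟨i, rfl⟩ : Subtype p)]; exact h
    · intro h; exact h _
  rw [hset]
  exact @pi_box_singleton_null (Subtype p) (Subtype.fintype p) hne μ ‹_› ‹_› (G v)

/-! ### The quadrant and MSA events -/

/-- `U w = w (0,2) - w (0,1)`. -/
def Uc (w : ι → ℝ) : ℝ := w (0, 2) - w (0, 1)

/-- `V w = w (1,0) - w (1,2)`. -/
def Vc (w : ι → ℝ) : ℝ := w (1, 0) - w (1, 2)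

lemma measurable_Uc : Measurable Uc := (measurable_pi_apply _).sub (measurable_pi_apply _)

lemma measurable_Vc : Measurable Vc := (measurable_pi_apply _).sub (measurable_pi_apply _)

lemma tieU : (Measure.pi fun _ : ι => μ) {w | Uc w = 0} = 0 := by
  have h : {w : ι → ℝ | Uc w = 0} = {w : ι → ℝ | w (0, 2) = w (0, 1)} := by
    ext w; simp [Uc, sub_eq_zero]
  rw [h]
  exact tie μ (0, 2) (fun w => w (0, 1)) (measurable_pi_apply _)
    (fun w c => Function.update_of_ne (by decide) _ _)

lemma tieV : (Measure.pi fun _ : ι => μ) {w | Vc w = 0} = 0 := by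
  have h : {w : ι → ℝ | Vc w = 0} = {w : ι → ℝ | w (1, 0) = w (1, 2)} := by
    ext w; simp [Vc, sub_eq_zero]
  rw [h]
  exact tie μ (1, 0) (fun w => w (1, 2)) (measurable_pi_apply _)
    (fun w c => Function.update_of_ne (by decide) _ _)

lemma tieUV : (Measure.pi fun _ : ι => μ) {w | Uc w + Vc w = 0} = 0 := by
  have h : {w : ι → ℝ | Uc w + Vc w = 0}
      = {w : ι → ℝ | w (0, 2) = w (0, 1) - w (1, 0) + w (1, 2)} := by
    ext w; simp only [Uc, Vc, mem_setOf_eq]; constructor <;> intro h <;> linarith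
  rw [h]
  refine tie μ (0, 2) (fun w => w (0, 1) - w (1, 0) + w (1, 2))
    (by fun_prop) ?_
  intro w c
  show Function.update w (0, 2) c (0, 1) - Function.update w (0, 2) c (1, 0)
      + Function.update w (0, 2) c (1, 2) = w (0, 1) - w (1, 0) + w (1, 2)
  rw [Function.update_of_ne (by decide), Function.update_of_ne (by decide),
    Function.update_of_ne (by decide)]

/-- swap flipping the sign of `U`. -/
def e₁ : ι ≃ ι := Equiv.swap (0, 1) (0, 2)

/-- swap flipping the sign of `V`. -/
def e₂ : ι ≃ ι := Equiv.swap (1, 0) (1, 2)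

/-- permutation with `U ∘ e₃ = -V`, `V ∘ e₃ = -U`. -/
def e₃ : ι ≃ ι := (Equiv.swap (0, 1) (1, 0)).trans (Equiv.swap (0, 2) (1, 2))

lemma Uc_e₁ (w : ι → ℝ) : Uc (w ∘ e₁) = -Uc w := by
  simp only [Uc, Function.comp, e₁, Equiv.swap_apply_left, Equiv.swap_apply_right]; ring

lemma Vc_e₁ (w : ι → ℝ) : Vc (w ∘ e₁) = Vc w := by
  simp only [Vc, Function.comp, e₁]
  rw [Equiv.swap_apply_of_ne_of_ne (by decide) (by decide),
    Equiv.swap_apply_of_ne_of_ne (by decide) (by decide)]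

lemma Uc_e₂ (w : ι → ℝ) : Uc (w ∘ e₂) = Uc w := by
  simp only [Uc, Function.comp, e₂]
  rw [Equiv.swap_apply_of_ne_of_ne (by decide) (by decide),
    Equiv.swap_apply_of_ne_of_ne (by decide) (by decide)]

lemma Vc_e₂ (w : ι → ℝ) : Vc (w ∘ e₂) = -Vc w := by
  simp only [Vc, Function.comp, e₂, Equiv.swap_apply_left, Equiv.swap_apply_right]; ring

lemma e₃_apply₁ : e₃ (0, 2) = (1, 2) := by decide

lemma e₃_apply₂ : e₃ (0, 1) = (1, 0) := by decide

lemma e₃_apply₃ : e₃ (1, 0) = (0, 1) := by decide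

lemma e₃_apply₄ : e₃ (1, 2) = (0, 2) := by decide

lemma Uc_e₃ (w : ι → ℝ) : Uc (w ∘ e₃) = -Vc w := by
  simp only [Uc, Vc, Function.comp, e₃_apply₁, e₃_apply₂]; ring

lemma Vc_e₃ (w : ι → ℝ) : Vc (w ∘ e₃) = -Uc w := by
  simp only [Uc, Vc, Function.comp, e₃_apply₃, e₃_apply₄]; ring

lemma quarter : (Measure.pi fun _ : ι => μ) {w | Uc w < 0 ∧ 0 < Vc w} = 4⁻¹ := by
  set π := (Measure.pi fun _ : ι => μ) with hπ
  set Q₁ : Set (ι → ℝ) := {w | 0 < Uc w ∧ 0 < Vc w} with hQ₁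
  set Q₂ : Set (ι → ℝ) := {w | Uc w < 0 ∧ 0 < Vc w} with hQ₂
  set Q₃ : Set (ι → ℝ) := {w | 0 < Uc w ∧ Vc w < 0} with hQ₃
  set Q₄ : Set (ι → ℝ) := {w | Uc w < 0 ∧ Vc w < 0} with hQ₄
  have hUpos : MeasurableSet {w : ι → ℝ | 0 < Uc w} := measurableSet_lt measurable_const measurable_Uc
  have hUneg : MeasurableSet {w : ι → ℝ | Uc w < 0} := measurableSet_lt measurable_Uc measurable_const
  have hVpos : MeasurableSet {w : ι → ℝ | 0 < Vc w} := measurableSet_lt measurable_const measurable_Vc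
  have hVneg : MeasurableSet {w : ι → ℝ | Vc w < 0} := measurableSet_lt measurable_Vc measurable_const
  have hm₁ : MeasurableSet Q₁ := hUpos.inter hVpos
  have hm₂ : MeasurableSet Q₂ := hUneg.inter hVpos
  have hm₃ : MeasurableSet Q₃ := hUpos.inter hVneg
  have hm₄ : MeasurableSet Q₄ := hUneg.inter hVneg
  have h12 : π Q₂ = π Q₁ := by
    rw [← (perm μ e₁).measure_preimage hm₁.nullMeasurableSet]
    congr 1
    ext w
    simp only [mem_preimage, hQ₁, hQ₂, mem_setOf_eq, Uc_e₁, Vc_e₁, neg_pos]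
  have h13 : π Q₃ = π Q₁ := by
    rw [← (perm μ e₂).measure_preimage hm₁.nullMeasurableSet]
    congr 1
    ext w
    simp only [mem_preimage, hQ₁, hQ₃, mem_setOf_eq, Uc_e₂, Vc_e₂, neg_pos]
  have h14 : π Q₄ = π Q₂ := by
    rw [← (perm μ e₂).measure_preimage hm₂.nullMeasurableSet]
    congr 1
    ext w
    simp only [mem_preimage, hQ₂, hQ₄, mem_setOf_eq, Uc_e₂, Vc_e₂, neg_pos]
  have hcompl : (Q₁ ∪ Q₂ ∪ Q₃ ∪ Q₄)ᶜ ⊆ {w | Uc w = 0} ∪ {w | Vc w = 0} := by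
    intro w hw
    rcases lt_trichotomy (Uc w) 0 with hU | hU | hU
    · rcases lt_trichotomy (Vc w) 0 with hV | hV | hV
      · exact (hw (Or.inr ⟨hU, hV⟩)).elim
      · exact Or.inr hV
      · exact (hw (Or.inl (Or.inl (Or.inr ⟨hU, hV⟩)))).elim
    · exact Or.inl hU
    · rcases lt_trichotomy (Vc w) 0 with hV | hV | hV
      · exact (hw (Or.inl (Or.inr ⟨hU, hV⟩))).elim
      · exact Or.inr hV
      · exact (hw (Or.inl (Or.inl (Or.inl ⟨hU, hV⟩)))).elim
  have hun : π (Q₁ ∪ Q₂ ∪ Q₃ ∪ Q₄) = 1 := by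
    have h0 : π (Q₁ ∪ Q₂ ∪ Q₃ ∪ Q₄)ᶜ = 0 :=
      measure_mono_null hcompl (measure_union_null (tieU μ) (tieV μ))
    have := measure_add_measure_compl (μ := π) (((hm₁.union hm₂).union hm₃).union hm₄)
    rw [h0, add_zero, measure_univ] at this
    exact this
  have d14 : Disjoint Q₁ Q₄ := by
    rw [Set.disjoint_left]; rintro w ⟨h1, _⟩ ⟨h2, _⟩; exact absurd h1 (not_lt.mpr h2.le)
  have d24 : Disjoint Q₂ Q₄ := by
    rw [Set.disjoint_left]; rintro w ⟨_, h1⟩ ⟨_, h2⟩; exact absurd h1 (not_lt.mpr h2.le)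
  have d34 : Disjoint Q₃ Q₄ := by
    rw [Set.disjoint_left]; rintro w ⟨h1, _⟩ ⟨h2, _⟩; exact absurd h1 (not_lt.mpr h2.le)
  have d13 : Disjoint Q₁ Q₃ := by
    rw [Set.disjoint_left]; rintro w ⟨_, h1⟩ ⟨_, h2⟩; exact absurd h1 (not_lt.mpr h2.le)
  have d23 : Disjoint Q₂ Q₃ := by
    rw [Set.disjoint_left]; rintro w ⟨h1, _⟩ ⟨h2, _⟩; exact absurd h2 (not_lt.mpr h1.le)
  have d12 : Disjoint Q₁ Q₂ := by
    rw [Set.disjoint_left]; rintro w ⟨h1, _⟩ ⟨h2, _⟩; exact absurd h1 (not_lt.mpr h2.le)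
  have hadd : π (Q₁ ∪ Q₂ ∪ Q₃ ∪ Q₄) = π Q₁ + π Q₂ + π Q₃ + π Q₄ := by
    rw [measure_union ((d14.union_left d24).union_left d34) hm₄,
      measure_union (d13.union_left d23) hm₃, measure_union d12 hm₂]
  rw [hadd, h12, h13, h14, h12] at hun
  have h4 : (4 : ℝ≥0∞) * π Q₁ = 1 := by
    rw [← hun]; ring
  have : π Q₁ = 4⁻¹ := by
    calc π Q₁ = 4⁻¹ * (4 * π Q₁) := by
          rw [← mul_assoc, ENNReal.inv_mul_cancel (by norm_num) (by norm_num), one_mul]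
      _ = 4⁻¹ := by rw [h4, mul_one]
  rw [h12, this]

lemma eighth₁ : (Measure.pi fun _ : ι => μ) {w | 0 < Uc w ∧ 0 < Uc w + Vc w}
    = 2⁻¹ * (1 - 4⁻¹) := by
  set π := (Measure.pi fun _ : ι => μ) with hπ
  set E₁ : Set (ι → ℝ) := {w | 0 < Uc w ∧ 0 < Uc w + Vc w} with hE₁
  set E₂ : Set (ι → ℝ) := {w | Vc w < 0 ∧ Uc w + Vc w < 0} with hE₂
  set E₃ : Set (ι → ℝ) := {w | Uc w < 0 ∧ 0 < Vc w} with hE₃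
  have hSm : Measurable fun w : ι → ℝ => Uc w + Vc w := measurable_Uc.add measurable_Vc
  have hm₁ : MeasurableSet E₁ :=
    (measurableSet_lt measurable_const measurable_Uc).inter (measurableSet_lt measurable_const hSm)
  have hm₂ : MeasurableSet E₂ :=
    (measurableSet_lt measurable_Vc measurable_const).inter (measurableSet_lt hSm measurable_const)
  have hm₃ : MeasurableSet E₃ :=
    (measurableSet_lt measurable_Uc measurable_const).inter (measurableSet_lt measurable_const measurable_Vc)
  have h12 : π E₂ = π E₁ := by
    rw [← (perm μ e₃).measure_preimage hm₁.nullMeasurableSet]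
    congr 1
    ext w
    simp only [mem_preimage, hE₁, hE₂, mem_setOf_eq, Uc_e₃, Vc_e₃]
    constructor
    · rintro ⟨h1, h2⟩; constructor <;> linarith
    · rintro ⟨h1, h2⟩; constructor <;> linarith
  have h3 : π E₃ = 4⁻¹ := quarter μ
  have hcompl : (E₁ ∪ E₂ ∪ E₃)ᶜ ⊆ {w | Uc w = 0} ∪ {w | Vc w = 0} ∪ {w | Uc w + Vc w = 0} := by
    intro w hw
    rcases lt_trichotomy (Uc w) 0 with hU | hU | hU
    · rcases lt_trichotomy (Vc w) 0 with hV | hV | hV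
      · exact (hw (Or.inl (Or.inr ⟨hV, by linarith⟩))).elim
      · exact Or.inl (Or.inr hV)
      · exact (hw (Or.inr ⟨hU, hV⟩)).elim
    · exact Or.inl (Or.inl hU)
    · rcases lt_trichotomy (Uc w + Vc w) 0 with hS | hS | hS
      · exact (hw (Or.inl (Or.inr ⟨by linarith, hS⟩))).elim
      · exact Or.inr hS
      · exact (hw (Or.inl (Or.inl ⟨hU, hS⟩))).elim
  have hun : π (E₁ ∪ E₂ ∪ E₃) = 1 := by
    have h0 : π (E₁ ∪ E₂ ∪ E₃)ᶜ = 0 :=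
      measure_mono_null hcompl
        (measure_union_null (measure_union_null (tieU μ) (tieV μ)) (tieUV μ))
    have := measure_add_measure_compl (μ := π) ((hm₁.union hm₂).union hm₃)
    rw [h0, add_zero, measure_univ] at this
    exact this
  have d12 : Disjoint E₁ E₂ := by
    rw [Set.disjoint_left]; rintro w ⟨_, h1⟩ ⟨_, h2⟩; exact absurd h1 (not_lt.mpr h2.le)
  have d13 : Disjoint E₁ E₃ := by
    rw [Set.disjoint_left]; rintro w ⟨h1, _⟩ ⟨h2, _⟩; exact absurd h1 (not_lt.mpr h2.le)
  have d23 : Disjoint E₂ E₃ := by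
    rw [Set.disjoint_left]; rintro w ⟨h1, _⟩ ⟨_, h2⟩; exact absurd h2 (not_lt.mpr h1.le)
  have hadd : π (E₁ ∪ E₂ ∪ E₃) = π E₁ + π E₂ + π E₃ := by
    rw [measure_union (d13.union_left d23) hm₃, measure_union d12 hm₂]
  rw [hadd, h12, h3] at hun
  have h2x : 2 * π E₁ + 4⁻¹ = 1 := by rw [two_mul]; exact hun
  have hsub : 2 * π E₁ = 1 - 4⁻¹ := ENNReal.eq_sub_of_add_eq (by norm_num) h2x
  calc π E₁ = 2⁻¹ * (2 * π E₁) := by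
        rw [← mul_assoc, ENNReal.inv_mul_cancel (by norm_num) (by norm_num), one_mul]
    _ = 2⁻¹ * (1 - 4⁻¹) := by rw [hsub]

lemma eighth₂ : (Measure.pi fun _ : ι => μ) {w | Vc w < 0 ∧ Uc w + Vc w < 0}
    = 2⁻¹ * (1 - 4⁻¹) := by
  rw [← eighth₁ μ]
  set π := (Measure.pi fun _ : ι => μ) with hπ
  have hSm : Measurable fun w : ι → ℝ => Uc w + Vc w := measurable_Uc.add measurable_Vc
  have hm₁ : MeasurableSet {w : ι → ℝ | 0 < Uc w ∧ 0 < Uc w + Vc w} :=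
    (measurableSet_lt measurable_const measurable_Uc).inter (measurableSet_lt measurable_const hSm)
  rw [← (perm μ e₃).measure_preimage hm₁.nullMeasurableSet]
  congr 1
  ext w
  simp only [mem_preimage, mem_setOf_eq, Uc_e₃, Vc_e₃]
  constructor
  · rintro ⟨h1, h2⟩; constructor <;> linarith
  · rintro ⟨h1, h2⟩; constructor <;> linarith


lemma ev12 : TriangleMSAEvent 1 2 = {w | 0 < Uc w ∧ 0 < Uc w + Vc w} := by
  ext w
  simp only [TriangleMSAEvent, mem_setOf_eq, Uc, Vc]
  constructor
  · intro h
    have h1 := h 2 2 ⟨by decide, by decide, by decide⟩ (by decide)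
    have h2 := h 2 0 ⟨by decide, by decide, by decide⟩ (by decide)
    constructor <;> linarith
  · rintro ⟨h1, h2⟩ a' b' ⟨ha1, ha2, ha3⟩ hne
    fin_cases a' <;> fin_cases b' <;> simp_all <;> linarith

lemma ev20 : TriangleMSAEvent 2 0 = {w | Vc w < 0 ∧ Uc w + Vc w < 0} := by
  ext w
  simp only [TriangleMSAEvent, mem_setOf_eq, Uc, Vc]
  constructor
  · intro h
    have h1 := h 2 2 ⟨by decide, by decide, by decide⟩ (by decide)
    have h2 := h 1 2 ⟨by decide, by decide, by decide⟩ (by decide)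
    constructor <;> linarith
  · rintro ⟨h1, h2⟩ a' b' ⟨ha1, ha2, ha3⟩ hne
    fin_cases a' <;> fin_cases b' <;> simp_all <;> linarith

lemma ev22 : TriangleMSAEvent 2 2 = {w | Uc w < 0 ∧ 0 < Vc w} := by
  ext w
  simp only [TriangleMSAEvent, mem_setOf_eq, Uc, Vc]
  constructor
  · intro h
    have h1 := h 1 2 ⟨by decide, by decide, by decide⟩ (by decide)
    have h2 := h 2 0 ⟨by decide, by decide, by decide⟩ (by decide)
    constructor <;> linarith
  · rintro ⟨h1, h2⟩ a' b' ⟨ha1, ha2, ha3⟩ hne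
    fin_cases a' <;> fin_cases b' <;> simp_all <;> linarith

end Stmt5Aux


/-- On the directed triangle with vertices `{v1, v2, ∂} = {0, 1, 2}`, all six
oriented edges carrying i.i.d. weights, the law of the minimal spanning arborescence is the
same for i.i.d. Exponential(1) weights and i.i.d. Uniform[0,1] weights: for every spanning
arborescence, the probability that it is the MSA is the same under both product measures. -/
theorem stmt_5 (a b : Fin 3) (hab : TriangleArb a b) :
    (Measure.pi fun _ : Fin 3 × Fin 3 => expMeasure 1) (TriangleMSAEvent a b)
      = (Measure.pi fun _ : Fin 3 × Fin 3 => volume.restrict (Icc (0 : ℝ) 1))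
          (TriangleMSAEvent a b) := by
  haveI : IsProbabilityMeasure (expMeasure 1) := isProbabilityMeasure_expMeasure one_pos
  haveI : NullSingletonClass (expMeasure 1) :=
    ⟨fun x => (withDensity_absolutelyContinuous volume _) (measure_singleton x)⟩
  haveI : IsProbabilityMeasure (volume.restrict (Icc (0 : ℝ) 1)) :=
    ⟨by rw [Measure.restrict_apply_univ, Real.volume_Icc]; norm_num⟩
  haveI : NullSingletonClass (volume.restrict (Icc (0 : ℝ) 1)) :=
    ⟨fun x => by
      rw [Measure.restrict_apply (measurableSet_singleton x)]
      exact measure_mono_null inter_subset_left (measure_singleton x)⟩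
  have hcases : (a = 1 ∧ b = 2) ∨ (a = 2 ∧ b = 0) ∨ (a = 2 ∧ b = 2) := by
    obtain ⟨h1, h2, h3⟩ := hab
    fin_cases a <;> fin_cases b <;> simp_all
  rcases hcases with ⟨rfl, rfl⟩ | ⟨rfl, rfl⟩ | ⟨rfl, rfl⟩
  · rw [Stmt5Aux.ev12, Stmt5Aux.eighth₁, Stmt5Aux.eighth₁]
  · rw [Stmt5Aux.ev20, Stmt5Aux.eighth₂, Stmt5Aux.eighth₂]
  · rw [Stmt5Aux.ev22, Stmt5Aux.quarter, Stmt5Aux.quarter]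
end

section
/- Let G be a finite connected directed multigraph with boundary vertex ∂, and let C be a directed cycle in G not passing through ∂. If T' is a spanning arborescence of the contracted graph Ψ_contr((G,∂),C), then the uncontraction T = Ψ_ucontr((G,∂),(G',∂),C,T') is a spanning arborescence of (G,∂). -/
open scoped Classical

/-- A directed multigraph on vertex type `V` with oriented-edge type `E`. -/
structure DirMultigraph (V : Type*) (E : Type*) where
  tail : E → V
  head : E → V

namespace DirMultigraph

variable {V E : Type*} (G : DirMultigraph V E)

/-- `G` has no self-loops. -/
def NoSelfLoops : Prop := ∀ e : E, G.tail e ≠ G.head e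

/-- `G` is connected as an undirected multigraph. -/
def Connected : Prop :=
  ∀ u v : V, Relation.ReflTransGen
    (fun a b => ∃ e : E, (G.tail e = a ∧ G.head e = b) ∨ (G.tail e = b ∧ G.head e = a)) u v

/-- The set of edges `S` contains a directed cycle (a nonempty cyclically indexed family of
pairwise distinct edges, the head of each being the tail of the next). -/
def HasCycleIn (S : Set E) : Prop :=
  ∃ (n : ℕ) (c : ZMod n → E), 0 < n ∧ Function.Injective c ∧
    (∀ i, c i ∈ S) ∧ ∀ i, G.head (c i) = G.tail (c (i + 1))

/-- `S` is a spanning arborescence of `(G, bd)`: every vertex other than the boundary `bd`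
has exactly one outgoing edge in `S`, the boundary has none, and there are no directed
cycles. -/
def IsArborescence (bd : V) (S : Set E) : Prop :=
  (∀ v : V, v ≠ bd → ∃! e, e ∈ S ∧ G.tail e = v) ∧
  (∀ e ∈ S, G.tail e ≠ bd) ∧ ¬ G.HasCycleIn S

/-- `C` is the edge set of a (vertex-)simple directed cycle. -/
def IsCycleSet (C : Set E) : Prop :=
  ∃ (n : ℕ) (c : ZMod n → E), 0 < n ∧ Function.Injective c ∧
    Function.Injective (fun i => G.tail (c i)) ∧
    (∀ i, G.head (c i) = G.tail (c (i + 1))) ∧ Set.range c = C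

/-- The set of vertices that are endpoints of edges in `S`. -/
def verts (S : Set E) : Set V := {v | ∃ e ∈ S, G.tail e = v ∨ G.head e = v}

/-- The edges surviving the contraction of the vertex set `A`: those not having both
endpoints in `A`. -/
abbrev ContractedE (A : Set V) : Type _ := {e : E // G.tail e ∉ A ∨ G.head e ∉ A}

/-- Contraction of the vertex set `A` into a single new vertex (`none`): edges with both
endpoints in `A` (which would become self-loops) are deleted, and edges with exactly one
endpoint in `A` are redirected to the new vertex `none`; vertices outside `A` are kept. -/
noncomputable def contract (A : Set V) : DirMultigraph (Option {v : V // v ∉ A}) (G.ContractedE A) where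
  tail e := if h : G.tail e.1 ∈ A then none else some ⟨G.tail e.1, h⟩
  head e := if h : G.head e.1 ∈ A then none else some ⟨G.head e.1, h⟩

/-- The weights `w` are generic: no nontrivial integer combination of the nonzero weights
vanishes. -/
def Generic (w : E → ℝ) : Prop :=
  ∀ (s : Finset E) (n : E → ℤ), (∀ e ∈ s, w e ≠ 0) → (∃ e ∈ s, n e ≠ 0) →
    ∑ e ∈ s, (n e : ℝ) * w e ≠ 0

/-- The total weight of a set of edges. -/
noncomputable def wsum [Fintype E] (w : E → ℝ) (S : Set E) : ℝ :=
  ∑ e : E, S.indicator w e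

/-- `T` is a minimal spanning arborescence of `(G, bd)` for the weights `w`. -/
def IsMSA [Fintype E] (bd : V) (w : E → ℝ) (T : Set E) : Prop :=
  G.IsArborescence bd T ∧
    ∀ T' : Set E, G.IsArborescence bd T' → wsum w T ≤ wsum w T'

end DirMultigraph

open DirMultigraph

/-- Let `G` be a finite connected directed multigraph with boundary vertex
`bd`, and let `C` be a directed cycle in `G` not passing through `bd`.  If `T'` is a
spanning arborescence of the contracted graph `Ψ_contr((G, bd), C)`, then the uncontraction
`T = Ψ_ucontr((G, bd), (G', bd), C, T')` — namely the union of the edges of `C` with the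
edges of `T'`, minus the edge `eC` of `C` leaving the same vertex as the `T'`-edge `f`
outgoing from the contracted vertex — is a spanning arborescence of `(G, bd)`. -/
theorem stmt_6 {V E : Type} [Fintype V] [Fintype E] (G : DirMultigraph V E)
    (hloop : G.NoSelfLoops) (hconn : G.Connected) (bd : V)
    (C : Set E) (hC : G.IsCycleSet C) (hbd : bd ∉ G.verts C)
    (T' : Set (G.ContractedE (G.verts C)))
    (hT' : (G.contract (G.verts C)).IsArborescence (some ⟨bd, hbd⟩) T')
    (f : G.ContractedE (G.verts C)) (hfT : f ∈ T') (hf : G.tail f.1 ∈ G.verts C)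
    (eC : E) (heC : eC ∈ C) (heCf : G.tail eC = G.tail f.1) :
    G.IsArborescence bd ((C ∪ (Subtype.val '' T')) \ {eC}) := by
  
  classical
  obtain ⟨m, c, hm, hcinj, htinj, hhead, hrange⟩ := hC
  have hcC : ∀ i, c i ∈ C := fun i => hrange ▸ Set.mem_range_self i
  have hCA : ∀ e ∈ C, G.tail e ∈ (G.verts C) ∧ G.head e ∈ (G.verts C) :=
    fun e he => ⟨⟨e, he, Or.inl rfl⟩, ⟨e, he, Or.inr rfl⟩⟩
  have hmemc : ∀ e ∈ C, ∃ i, c i = e := fun e he => by rwa [← hrange] at he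
  have hAiff : ∀ v, v ∈ (G.verts C) → ∃ i, G.tail (c i) = v := by
    rintro v ⟨e, he, hv⟩
    obtain ⟨i, rfl⟩ := hmemc e he
    rcases hv with h | h
    · exact ⟨i, h⟩
    · exact ⟨i + 1, by rw [← hhead]; exact h⟩
  have ctail_none_iff : ∀ e : G.ContractedE (G.verts C),
      (G.contract (G.verts C)).tail e = none ↔ G.tail e.1 ∈ (G.verts C) := by
    intro e
    simp only [DirMultigraph.contract]
    split_ifs with h <;> simp [h]
  have ctail_some : ∀ (e : G.ContractedE (G.verts C)) (h : G.tail e.1 ∉ (G.verts C)),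
      (G.contract (G.verts C)).tail e = some ⟨G.tail e.1, h⟩ := by
    intro e h
    simp only [DirMultigraph.contract]
    rw [dif_neg h]
  have chead_none : ∀ (e : G.ContractedE (G.verts C)), G.head e.1 ∈ (G.verts C) →
      (G.contract (G.verts C)).head e = none := by
    intro e h
    simp only [DirMultigraph.contract]
    rw [dif_pos h]
  -- facts about f
  have hfhead : G.head f.1 ∉ (G.verts C) := f.2.resolve_left (not_not_intro hf)
  have hfC : f.1 ∉ C := fun h => hfhead (hCA _ h).2
  have hfne : f.1 ≠ eC := fun h => hfC (h ▸ heC)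
  have hctf : (G.contract (G.verts C)).tail f = none := (ctail_none_iff f).mpr hf
  have hne_none : (none : Option {v : V // v ∉ (G.verts C)}) ≠ some ⟨bd, hbd⟩ :=
    fun h => (Option.some_ne_none _) h.symm
  obtain ⟨g0, hg0, hg0u⟩ := hT'.1 none hne_none
  have hfu : ∀ e' ∈ T', G.tail e'.1 ∈ (G.verts C) → e' = f := by
    intro e' he' h
    have h1 := hg0u e' ⟨he', (ctail_none_iff e').mpr h⟩
    have h2 := hg0u f ⟨hfT, hctf⟩
    rw [h1, h2]
  refine ⟨?_, ?_, ?_⟩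
  · -- unique outgoing edge
    intro v hv
    by_cases hvA : v ∈ (G.verts C)
    · obtain ⟨i0, hi0⟩ := hmemc eC heC
      by_cases hve : v = G.tail eC
      · refine ⟨f.1, ⟨⟨Or.inr ⟨f, hfT, rfl⟩, hfne⟩, by rw [← heCf, hve]⟩, ?_⟩
        rintro e ⟨⟨he, hne⟩, hte⟩
        rcases he with heC' | ⟨e', he', rfl⟩
        · obtain ⟨j, rfl⟩ := hmemc e heC'
          have hj : j = i0 := htinj (show G.tail (c j) = G.tail (c i0) by
            rw [hte, hve, hi0])
          exact absurd (show c j = eC by rw [hj, hi0]) hne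
        · exact congrArg Subtype.val (hfu e' he' (by rw [hte]; exact hvA))
      · obtain ⟨i, hi⟩ := hAiff v hvA
        have hcine : c i ≠ eC := fun h => hve (by rw [← hi, h])
        refine ⟨c i, ⟨⟨Or.inl (hcC i), hcine⟩, hi⟩, ?_⟩
        rintro e ⟨⟨he, hne⟩, hte⟩
        rcases he with heC' | ⟨e', he', rfl⟩
        · obtain ⟨j, rfl⟩ := hmemc e heC'
          exact congrArg c (htinj (show G.tail (c j) = G.tail (c i) by rw [hte, hi]))
        · exfalso
          have hef := hfu e' he' (by rw [hte]; exact hvA)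
          exact hve (by rw [← hte, hef]; exact heCf.symm)
    · have hvbd : (some ⟨v, hvA⟩ : Option {v : V // v ∉ (G.verts C)}) ≠ some ⟨bd, hbd⟩ := by
        intro h
        exact hv (congrArg Subtype.val (Option.some_injective _ h))
      obtain ⟨e', ⟨he'T, he'tail⟩, he'u⟩ := hT'.1 (some ⟨v, hvA⟩) hvbd
      have hte' : G.tail e'.1 = v := by
        by_cases h : G.tail e'.1 ∈ (G.verts C)
        · rw [(ctail_none_iff e').mpr h] at he'tail
          exact absurd he'tail (by simp)
        · rw [ctail_some e' h] at he'tail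
          exact congrArg Subtype.val (Option.some_injective _ he'tail)
      have he'ne : e'.1 ≠ eC := fun h => hvA (by rw [← hte', h]; exact (hCA eC heC).1)
      refine ⟨e'.1, ⟨⟨Or.inr ⟨e', he'T, rfl⟩, he'ne⟩, hte'⟩, ?_⟩
      rintro e ⟨⟨he, hne⟩, hte⟩
      rcases he with heC' | ⟨e'', he'', rfl⟩
      · exact absurd ((hCA e heC').1) (by rw [hte]; exact hvA)
      · have hct : (G.contract (G.verts C)).tail e'' = some ⟨v, hvA⟩ := by
          rw [ctail_some e'' (by rw [hte]; exact hvA)]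
          exact congrArg some (Subtype.ext hte)
        exact congrArg Subtype.val (he'u e'' ⟨he'', hct⟩)
  · -- no edge out of bd
    rintro e ⟨he, -⟩ hbde
    rcases he with heC' | ⟨e', he', rfl⟩
    · exact hbd (hbde ▸ (hCA e heC').1)
    · by_cases h : G.tail e'.1 ∈ (G.verts C)
      · exact hbd (hbde ▸ h)
      · exact hT'.2.1 e' he'
          (by rw [ctail_some e' h]; exact congrArg some (Subtype.ext hbde))
  · -- no cycle
    rintro ⟨n, d, hn, hdinj, hdmem, hdhead⟩
    haveI : NeZero n := ⟨hn.ne'⟩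
    haveI : NeZero m := ⟨hm.ne'⟩
    have hdne : ∀ i, d i ∉ ({eC} : Set E) := fun i => (hdmem i).2
    have hdT : ∀ i, d i ∈ C ∪ Subtype.val '' T' := fun i => (hdmem i).1
    by_cases hall : ∀ i, d i ∈ C
    · choose σ hσ using fun i => hmemc (d i) (hall i)
      have hσinj : Function.Injective σ :=
        fun i j h => hdinj (by rw [← hσ i, ← hσ j, h])
      have hstep : ∀ i, σ (i + 1) = σ i + 1 := by
        intro i
        have hh : G.tail (c (σ (i + 1))) = G.tail (c (σ i + 1)) := by
          rw [hσ (i + 1), ← hdhead i, ← hσ i, hhead (σ i)]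
        exact htinj hh
      have hiter : ∀ (k : ℕ) (i : ZMod n), σ (i + (k : ℕ)) = σ i + (k : ℕ) := by
        intro k
        induction k with
        | zero => simp
        | succ k ih =>
          intro i
          have e1 : (((k + 1 : ℕ)) : ZMod n) = ((k : ℕ) : ZMod n) + 1 := by push_cast; ring
          have e2 : (((k + 1 : ℕ)) : ZMod m) = ((k : ℕ) : ZMod m) + 1 := by push_cast; ring
          rw [e1, e2, ← add_assoc, hstep (i + (k : ℕ)), ih i, add_assoc]
      have hdvd : m ∣ n := by
        have h0 := hiter n 0
        rw [ZMod.natCast_self, add_zero] at h0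
        exact (ZMod.natCast_eq_zero_iff n m).mp (left_eq_add.mp h0)
      have hle : n ≤ m := by
        have := Fintype.card_le_of_injective σ hσinj
        simpa [ZMod.card] using this
      obtain rfl : m = n := le_antisymm (Nat.le_of_dvd hn hdvd) hle
      obtain ⟨i0, hi0⟩ := hmemc eC heC
      obtain ⟨j, hj⟩ := (Finite.injective_iff_surjective.mp hσinj) i0
      exact hdne j (Set.mem_singleton_iff.mpr (by rw [← hσ j, hj]; exact hi0))
    · push_neg at hall
      obtain ⟨i0, hi0⟩ := hall
      have himg : ∀ i, d i ∉ C → ∃ e' ∈ T', e'.1 = d i := by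
        intro i h
        rcases hdT i with h' | ⟨e', he', hv⟩
        · exact absurd h' h
        · exact ⟨e', he', hv⟩
      have hside : ∀ i, d i ∉ C → (G.tail (d i) ∉ (G.verts C) ∨ G.head (d i) ∉ (G.verts C)) := by
        intro i h
        obtain ⟨e', _, hv⟩ := himg i h
        rw [← hv]
        exact e'.2
      have hTm : ∀ (i) (h : d i ∉ C), (⟨d i, hside i h⟩ : G.ContractedE (G.verts C)) ∈ T' := by
        intro i h
        obtain ⟨e', he', hv⟩ := himg i h
        have he : (⟨d i, hside i h⟩ : G.ContractedE (G.verts C)) = e' := Subtype.ext hv.symm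
        rw [he]
        exact he'
      have hP : ∀ i : ZMod n, ∃ k : ℕ, 0 < k ∧ d (i + (k : ℕ)) ∉ C := by
        intro i
        by_cases h : i = i0
        · exact ⟨n, hn, by rw [h, ZMod.natCast_self, add_zero]; exact hi0⟩
        · refine ⟨(i0 - i).val, ?_, ?_⟩
          · have hne0 : i0 - i ≠ 0 := sub_ne_zero.mpr (Ne.symm h)
            exact Nat.pos_of_ne_zero (fun hz => hne0 (by rwa [← ZMod.val_eq_zero]))
          · rw [ZMod.natCast_val, ZMod.cast_id, show i + (i0 - i) = i0 from by ring]
            exact hi0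
      let F : ZMod n → ZMod n := fun i => i + ((Nat.find (hP i) : ℕ) : ZMod n)
      have hFdef : ∀ i, F i = i + ((Nat.find (hP i) : ℕ) : ZMod n) := fun _ => rfl
      have hFC : ∀ i, d (F i) ∉ C := fun i => (Nat.find_spec (hP i)).2
      have hF0 : ∀ i, 0 < Nat.find (hP i) := fun i => (Nat.find_spec (hP i)).1
      have hFmin : ∀ (i : ZMod n) (k : ℕ), 0 < k → k < Nat.find (hP i) →
          d (i + (k : ℕ)) ∈ C := by
        intro i k hk hlt
        by_contra h
        exact Nat.find_min (hP i) hlt ⟨hk, h⟩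
      have hkey : ∀ (i) (h : d i ∉ C),
          (G.contract (G.verts C)).head (⟨d i, hside i h⟩ : G.ContractedE (G.verts C))
            = (G.contract (G.verts C)).tail ⟨d (F i), hside (F i) (hFC i)⟩ := by
        intro i h
        rcases Nat.lt_or_ge 1 (Nat.find (hP i)) with hK2 | hK1
        · have h1 : d (i + ((1 : ℕ) : ZMod n)) ∈ C := hFmin i 1 one_pos hK2
          have hheadA : G.head (d i) ∈ (G.verts C) := by
            rw [hdhead i]
            have := (hCA _ h1).1
            simpa using this
          have h2 : d (i + ((Nat.find (hP i) - 1 : ℕ) : ZMod n)) ∈ C :=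
            hFmin i _ (by have := hF0 i; omega) (by have := hF0 i; omega)
          have harith : (i + ((Nat.find (hP i) - 1 : ℕ) : ZMod n)) + 1 = F i := by
            rw [hFdef i, add_assoc]
            congr 1
            rw [Nat.cast_sub (hF0 i), Nat.cast_one]
            ring
          have htailA2 : G.tail (d (F i)) ∈ (G.verts C) := by
            have hh := hdhead (i + ((Nat.find (hP i) - 1 : ℕ) : ZMod n))
            rw [harith] at hh
            rw [← hh]
            exact (hCA _ h2).2
          rw [chead_none _ hheadA, (ctail_none_iff _).mpr htailA2]
        · have hK1' : Nat.find (hP i) = 1 := le_antisymm hK1 (hF0 i)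
          have hv : G.head (d i) = G.tail (d (F i)) := by
            rw [hFdef i, hK1']
            simpa using hdhead i
          simp only [DirMultigraph.contract]
          split_ifs with h1 h2 h2
          · rfl
          · exact absurd (hv ▸ h1) h2
          · exact absurd (hv.symm ▸ h2) h1
          · exact congrArg some (Subtype.ext hv)
      have hex : ∃ (x : ZMod n) (p : ℕ), 0 < p ∧ F^[p] x = x := by
        obtain ⟨a, b, hab, heq⟩ :=
          Finite.exists_ne_map_eq_of_infinite (fun a : ℕ => F^[a] i0)
        rcases Nat.lt_or_ge a b with h | h
        · refine ⟨F^[a] i0, b - a, by omega, ?_⟩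
          rw [← Function.iterate_add_apply, Nat.sub_add_cancel h.le]
          exact heq.symm
        · have h' : b < a := lt_of_le_of_ne h (Ne.symm hab)
          refine ⟨F^[b] i0, a - b, by omega, ?_⟩
          rw [← Function.iterate_add_apply, Nat.sub_add_cancel h'.le]
          exact heq
      obtain ⟨x, hxp⟩ := hex
      have hxs : ∀ s, d (F^[s] x) ∉ C := by
        intro s
        cases s with
        | zero =>
          obtain ⟨p, hp, hpx⟩ := hxp
          simp only [Function.iterate_zero, id_eq]
          have h1 : F (F^[p - 1] x) = x := by
            have h2 := Function.iterate_succ_apply' F (p - 1) x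
            rw [Nat.succ_eq_add_one, Nat.sub_add_cancel (by omega : 1 ≤ p)] at h2
            rw [← h2]
            exact hpx
          rw [← h1]
          exact hFC _
        | succ s =>
          rw [Function.iterate_succ_apply']
          exact hFC _
      obtain ⟨p, hp0, hpx, hpmin⟩ :
          ∃ p, 0 < p ∧ F^[p] x = x ∧ ∀ q, 0 < q → q < p → F^[q] x ≠ x := by
        have hpex : ∃ p, 0 < p ∧ F^[p] x = x := hxp
        exact ⟨Nat.find hpex, (Nat.find_spec hpex).1, (Nat.find_spec hpex).2,
          fun q hq hqp hcon => Nat.find_min hpex hqp ⟨hq, hcon⟩⟩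
      haveI : NeZero p := ⟨hp0.ne'⟩
      have hdist : ∀ s t, s < t → t < p → F^[s] x ≠ F^[t] x := by
        intro s t hst htp hcon
        apply hpmin ((p - t) + s) (by omega) (by omega)
        rw [Function.iterate_add_apply, hcon, ← Function.iterate_add_apply,
          Nat.sub_add_cancel htp.le, hpx]
      have hper : Function.IsPeriodicPt F p x := hpx
      have hmod : ∀ a : ℕ, F^[a % p] x = F^[a] x :=
        fun a => hper.iterate_mod_apply a
      apply hT'.2.2
      refine ⟨p, fun k => ⟨d (F^[k.val] x), hside _ (hxs k.val)⟩, hp0, ?_, ?_, ?_⟩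
      · intro k l hkl
        simp only [Subtype.mk.injEq] at hkl
        have h2 := hdinj hkl
        have hval : k.val = l.val := by
          rcases lt_trichotomy k.val l.val with h | h | h
          · exact absurd h2 (hdist _ _ h (ZMod.val_lt l))
          · exact h
          · exact absurd h2.symm (hdist _ _ h (ZMod.val_lt k))
        exact ZMod.val_injective p hval
      · intro k
        exact hTm _ (hxs k.val)
      · intro k
        have hval : (k + 1 : ZMod p).val = (k.val + 1) % p := by
          rw [ZMod.val_add, ZMod.val_one_eq_one_mod, Nat.add_mod k.val 1 p,
            Nat.mod_eq_of_lt (ZMod.val_lt k)]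
        have harg : F^[(k + 1 : ZMod p).val] x = F (F^[k.val] x) := by
          rw [hval, hmod]
          exact Function.iterate_succ_apply' F k.val x
        have h2 : (⟨d (F^[(k + 1 : ZMod p).val] x), hside _ (hxs (k + 1 : ZMod p).val)⟩ :
              G.ContractedE (G.verts C))
            = ⟨d (F (F^[k.val] x)), hside (F (F^[k.val] x)) (hFC (F^[k.val] x))⟩ :=
          Subtype.ext (congrArg d harg)
        dsimp only
        rw [h2]
        exact hkey _ (hxs k.val)
end

section
/- Let G be a finite connected directed multigraph with boundary ∂ and weights (U_e). Let C be a cycle all of whose edges have weight 0, with C not through ∂, and suppose the nonzero weights are generic (no nontrivial integer combination vanishes). If T' is the minimal spanning arborescence of the contracted graph (G',∂) = Ψ_contr((G,∂),C) (with the induced weights), then T = Ψ_ucontr((G,∂),(G',∂),C,T') is the minimal spanning arborescence of (G,∂). -/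
open scoped Classical

namespace DirMultigraph

variable {V E : Type*} (G : DirMultigraph V E)

/-- One step along an edge of `S`. -/
def Step (S : Set E) (a b : V) : Prop := ∃ e ∈ S, G.tail e = a ∧ G.head e = b

lemma step_mono {S S' : Set E} (h : S ⊆ S') {a b : V} (hs : G.Step S a b) :
    G.Step S' a b := by obtain ⟨e, he, h1, h2⟩ := hs; exact ⟨e, h he, h1, h2⟩

lemma reach_mono {S S' : Set E} (h : S ⊆ S') {a b : V}
    (hs : Relation.ReflTransGen (G.Step S) a b) :
    Relation.ReflTransGen (G.Step S') a b :=
  hs.lift id (fun _ _ hab => G.step_mono h hab)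

/-- If every vertex reaches `bd`, out-edges are unique, and no edge leaves `bd`, then
there is no directed cycle. -/
lemma noCycle_of_reach (bd : V) (S : Set E)
    (hout : ∀ v, ∀ e ∈ S, G.tail e = v → ∀ e' ∈ S, G.tail e' = v → e = e')
    (hbd : ∀ e ∈ S, G.tail e ≠ bd)
    (hreach : ∀ v, Relation.ReflTransGen (G.Step S) v bd) :
    ¬ G.HasCycleIn S := by
  rintro ⟨n, c, hn, hcinj, hmem, hhd⟩
  have key : ∀ v, Relation.ReflTransGen (G.Step S) v bd → ¬ ∃ i, G.tail (c i) = v := by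
    intro v hv
    induction hv using Relation.ReflTransGen.head_induction_on with
    | refl => rintro ⟨i, hi⟩; exact hbd _ (hmem i) hi
    | head hstep _ ih =>
      rintro ⟨i, hi⟩
      obtain ⟨e, heS, hte, hhe⟩ := hstep
      have : e = c i := hout _ e heS hte (c i) (hmem i) hi
      exact ih ⟨i + 1, by rw [← hhd i, ← this]; exact hhe⟩
  exact key _ (hreach (G.tail (c 0))) ⟨0, rfl⟩

/-- In an arborescence every vertex reaches the boundary. -/
lemma reach_of_arb [Fintype V] (bd : V) (S : Set E) (h : G.IsArborescence bd S) :
    ∀ v, Relation.ReflTransGen (G.Step S) v bd := by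
  obtain ⟨hout, hbd, hnc⟩ := h
  intro v0
  by_contra hv0
  have hv0bd : v0 ≠ bd := by rintro rfl; exact hv0 .refl
  have hE : Nonempty E := ⟨(hout v0 hv0bd).exists.choose⟩
  set eF : V → E := fun v =>
    if h : ∃ e, e ∈ S ∧ G.tail e = v then h.choose else Classical.arbitrary E with heFdef
  have heF : ∀ v, v ≠ bd → eF v ∈ S ∧ G.tail (eF v) = v := by
    intro v hv
    have hex : ∃ e, e ∈ S ∧ G.tail e = v := (hout v hv).exists
    simp only [heFdef, dif_pos hex]
    exact hex.choose_spec
  set g : V → V := fun v => G.head (eF v) with hgdef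
  have hNR : ∀ v, ¬ Relation.ReflTransGen (G.Step S) v bd →
      ¬ Relation.ReflTransGen (G.Step S) (g v) bd ∧ G.Step S v (g v) := by
    intro v hv
    have hvbd : v ≠ bd := by rintro rfl; exact hv .refl
    obtain ⟨hm, ht⟩ := heF v hvbd
    have hstep : G.Step S v (g v) := ⟨eF v, hm, ht, rfl⟩
    exact ⟨fun hr => hv (hr.head hstep), hstep⟩
  have hiter : ∀ k, ¬ Relation.ReflTransGen (G.Step S) (g^[k] v0) bd := by
    intro k; induction k with
    | zero => exact hv0
    | succ k ih => rw [Function.iterate_succ_apply']; exact (hNR _ ih).1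
  obtain ⟨a, b, hab, heq⟩ := Finite.exists_ne_map_eq_of_infinite (fun k : ℕ => g^[k] v0)
  wlog hlt : a < b generalizing a b
  · exact this b a hab.symm heq.symm (by omega)
  set u : V := g^[a] v0 with hudef
  have hgp : g^[b - a] u = u := by
    have h1 : g^[b - a] (g^[a] v0) = g^[b - a + a] v0 := (Function.iterate_add_apply g (b-a) a v0).symm
    have h2 : b - a + a = b := by omega
    rw [hudef, h1, h2, ← heq]
  have hQ : ∃ p, 0 < p ∧ g^[p] u = u := ⟨b - a, by omega, hgp⟩
  set p0 := Nat.find hQ with hp0def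
  obtain ⟨hp0pos, hp0fix⟩ := Nat.find_spec hQ
  have hmin : ∀ q < p0, ¬(0 < q ∧ g^[q] u = u) := fun q hq => Nat.find_min hQ hq
  have hu : ∀ k, ¬ Relation.ReflTransGen (G.Step S) (g^[k] u) bd := by
    intro k
    simp only [hudef, ← Function.iterate_add_apply]
    exact hiter _
  have hubd : ∀ k, g^[k] u ≠ bd := by
    intro k hk; exact hu k (hk ▸ Relation.ReflTransGen.refl)
  have hdist : ∀ x y : ℕ, x < p0 → y < p0 → g^[x] u = g^[y] u → x = y := by
    have main : ∀ x y : ℕ, x < y → y < p0 → g^[x] u = g^[y] u → False := by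
      intro x y hxy hy heq'
      have h1 : g^[p0 - y + x] u = u := by
        rw [Function.iterate_add_apply, heq', ← Function.iterate_add_apply]
        have : p0 - y + y = p0 := by omega
        rw [this, hp0fix]
      exact hmin (p0 - y + x) (by omega) ⟨by omega, h1⟩
    intro x y hx hy heq'
    rcases lt_trichotomy x y with h | h | h
    · exact absurd heq' (fun hh => main x y h hy hh)
    · exact h
    · exact absurd heq'.symm (fun hh => main y x h hx hh)
  have hper : ∀ m : ℕ, g^[m % p0] u = g^[m] u := by
    intro m
    conv_rhs => rw [show m = m % p0 + p0 * (m / p0) from (Nat.mod_add_div m p0).symm]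
    rw [Function.iterate_add_apply, Function.iterate_mul,
      Function.iterate_fixed hp0fix]
  haveI : NeZero p0 := ⟨hp0pos.ne'⟩
  refine hnc ⟨p0, fun k => eF (g^[k.val] u), hp0pos, ?_, ?_, ?_⟩
  · intro k k' hkk'
    have hcg := congrArg G.tail hkk'
    simp only at hcg
    rw [(heF _ (hubd k.val)).2, (heF _ (hubd k'.val)).2] at hcg
    exact ZMod.val_injective p0 (hdist _ _ (ZMod.val_lt k) (ZMod.val_lt k') hcg)
  · intro k; exact (heF _ (hubd k.val)).1
  · intro k
    show G.head (eF (g^[k.val] u)) = G.tail (eF (g^[(k + 1).val] u))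
    have h1 : G.head (eF (g^[k.val] u)) = g^[k.val + 1] u := by
      rw [Function.iterate_succ_apply']
    have h2 : (k + 1).val = (k.val + 1) % p0 := by
      have hcast : ((k.val + 1 : ℕ) : ZMod p0) = k + 1 := by
        rw [Nat.cast_add, Nat.cast_one, ZMod.natCast_zmod_val]
      rw [← hcast, ZMod.val_natCast]
    rw [h1, (heF _ (hubd (k+1).val)).2, h2, hper]

/-- Walking along the cycle `c` inside `T` one reaches `tail (c i0)` from any cycle
vertex. -/
lemma cwalk {n : ℕ} (hn : 0 < n) (c : ZMod n → E)
    (hhd : ∀ i, G.head (c i) = G.tail (c (i + 1)))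
    (T : Set E) (i0 : ZMod n) (hmem : ∀ i, i ≠ i0 → c i ∈ T) :
    ∀ i, Relation.ReflTransGen (G.Step T) (G.tail (c i)) (G.tail (c i0)) := by
  haveI : NeZero n := ⟨hn.ne'⟩
  have key : ∀ k : ℕ, k ≤ n →
      Relation.ReflTransGen (G.Step T) (G.tail (c (i0 + ((n - k : ℕ) : ZMod n))))
        (G.tail (c i0)) := by
    intro k
    induction k with
    | zero =>
      intro _
      simp only [Nat.sub_zero, ZMod.natCast_self, add_zero]
      exact Relation.ReflTransGen.refl
    | succ k ih =>
      intro hk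
      by_cases hj : i0 + ((n - (k+1) : ℕ) : ZMod n) = i0
      · rw [hj]
      · have harith : i0 + ((n - (k+1) : ℕ) : ZMod n) + 1 = i0 + ((n - k : ℕ) : ZMod n) := by
          have h2 : ((n - (k+1) : ℕ) : ZMod n) + 1 = ((n - k : ℕ) : ZMod n) := by
            rw [show (n - k : ℕ) = (n - (k+1)) + 1 by omega]
            push_cast; ring
          rw [add_assoc, h2]
        refine Relation.ReflTransGen.head
          (b := G.tail (c (i0 + ((n - k : ℕ) : ZMod n))))
          ⟨c (i0 + ((n - (k+1) : ℕ) : ZMod n)), hmem _ hj, rfl, by rw [hhd, harith]⟩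
          (ih (by omega))
  intro i
  have hmlt : (i - i0).val < n := ZMod.val_lt _
  have : i = i0 + ((n - (n - (i - i0).val) : ℕ) : ZMod n) := by
    rw [show n - (n - (i - i0).val) = (i - i0).val by omega, ZMod.natCast_zmod_val]
    ring
  rw [this]
  exact key (n - (i - i0).val) (by omega)

/-- Sum of weights over a set of surviving edges equals the sum over its image. -/
lemma wsum_subtype [Fintype E] (p : E → Prop) [Fintype (Subtype p)] (w : E → ℝ) (S : Set (Subtype p)) :
    wsum (fun e : Subtype p => w e.1) S = wsum w (Subtype.val '' S) := by
  classical
  unfold wsum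
  have h1 : ∀ e' : Subtype p, S.indicator (fun e : Subtype p => w e.1) e'
      = (Subtype.val '' S).indicator w e'.1 := by
    intro e'
    by_cases h : e' ∈ S
    · rw [Set.indicator_of_mem h, Set.indicator_of_mem (Set.mem_image_of_mem _ h)]
    · rw [Set.indicator_of_notMem h, Set.indicator_of_notMem]
      rintro ⟨x, hx, hxe⟩
      exact h ((Subtype.val_injective hxe) ▸ hx)
  rw [Finset.sum_congr rfl (fun e' _ => h1 e')]
  rw [← Finset.sum_subtype (Finset.univ.filter p) (by simp) ((Subtype.val '' S).indicator w)]
  apply Finset.sum_subset (Finset.filter_subset _ _)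
  intro e _ he
  simp only [Finset.mem_filter, Finset.mem_univ, true_and] at he
  apply Set.indicator_of_notMem
  rintro ⟨x, _, rfl⟩
  exact he x.2


lemma uniq_out {bd : V} {S : Set E} (hout : ∀ v, v ≠ bd → ∃! e, e ∈ S ∧ G.tail e = v)
    (hbd : ∀ e ∈ S, G.tail e ≠ bd) :
    ∀ v, ∀ e ∈ S, G.tail e = v → ∀ e' ∈ S, G.tail e' = v → e = e' := by
  intro v e he hte e' he' hte'
  have hv : v ≠ bd := by rw [← hte]; exact hbd e he
  obtain ⟨u, _, hu⟩ := hout v hv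
  rw [hu e ⟨he, hte⟩, hu e' ⟨he', hte'⟩]

lemma wsum_le_wsum [Fintype E] {w : E → ℝ} (hw : ∀ e, 0 ≤ w e) {S S' : Set E}
    (h : ∀ e ∈ S, e ∈ S' ∨ w e = 0) : wsum w S ≤ wsum w S' := by
  unfold wsum
  apply Finset.sum_le_sum
  intro e _
  by_cases he : e ∈ S
  · rw [Set.indicator_of_mem he]
    rcases h e he with h' | h'
    · rw [Set.indicator_of_mem h']
    · rw [h']
      exact Set.indicator_nonneg (fun a _ => hw a) _
  · rw [Set.indicator_of_notMem he]
    exact Set.indicator_nonneg (fun a _ => hw a) _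

end DirMultigraph

open DirMultigraph

/-- Let `G` be a finite connected directed multigraph with boundary `bd` and
nonnegative weights `w`.  Let `C` be a directed cycle all of whose edges have weight `0`,
not passing through `bd`, and suppose the weights are generic (no nontrivial integer
combination of the nonzero weights vanishes).  If `T'` is the minimal spanning arborescence
of the contracted graph `(G', bd) = Ψ_contr((G, bd), C)` with the induced weights, then the
uncontraction `T = Ψ_ucontr((G, bd), (G', bd), C, T')` — the union of the edges of `C` with
the edges of `T'` minus the edge `eC` of `C` leaving the same vertex as the `T'`-edge `f`
outgoing from the contracted vertex — is the minimal spanning arborescence of `(G, bd)`. -/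

theorem stmt_7 {V E : Type} [Fintype V] [Fintype E] (G : DirMultigraph V E)
    (hloop : G.NoSelfLoops) (hconn : G.Connected) (bd : V)
    (w : E → ℝ) (hw0 : ∀ e, 0 ≤ w e) (hgen : Generic w)
    (C : Set E) (hC : G.IsCycleSet C) (hCw : ∀ e ∈ C, w e = 0) (hbd : bd ∉ G.verts C)
    (T' : Set (G.ContractedE (G.verts C)))
    (hT' : (G.contract (G.verts C)).IsMSA (some ⟨bd, hbd⟩) (fun e => w e.1) T')
    (f : G.ContractedE (G.verts C)) (hfT : f ∈ T') (hf : G.tail f.1 ∈ G.verts C)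
    (eC : E) (heC : eC ∈ C) (heCf : G.tail eC = G.tail f.1) :
    G.IsMSA bd w ((C ∪ (Subtype.val '' T')) \ {eC}) := by
  classical
  obtain ⟨n, c, hn, hcinj, htinj, hhd, hrange⟩ := hC
  haveI : NeZero n := ⟨hn.ne'⟩
  obtain ⟨⟨hT'out, hT'bd, hT'nc⟩, hT'min⟩ := hT'
  set T : Set E := (C ∪ (Subtype.val '' T')) \ {eC} with hTdef
  -- basic facts about the cycle
  have hmemC : ∀ i, c i ∈ C := fun i => hrange ▸ Set.mem_range_self i
  have hidx : ∀ e ∈ C, ∃ i, c i = e := by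
    intro e he; rw [← hrange] at he; exact he
  have htailA : ∀ e ∈ C, G.tail e ∈ G.verts C := fun e he => ⟨e, he, Or.inl rfl⟩
  have hheadA : ∀ e ∈ C, G.head e ∈ G.verts C := by
    intro e he
    obtain ⟨i, rfl⟩ := hidx e he
    rw [hhd i]; exact htailA _ (hmemC _)
  have hAtail : ∀ v ∈ G.verts C, ∃ i, G.tail (c i) = v := by
    rintro v ⟨e, he, hor⟩
    obtain ⟨i, rfl⟩ := hidx e he
    rcases hor with h | h
    · exact ⟨i, h⟩
    · exact ⟨i + 1, by rw [← hhd i]; exact h⟩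
  obtain ⟨i0, hi0⟩ := hidx eC heC
  -- contraction computations
  have ctail : ∀ e' : G.ContractedE (G.verts C), (G.contract (G.verts C)).tail e'
      = if h : G.tail e'.1 ∈ G.verts C then none else some ⟨G.tail e'.1, h⟩ := fun _ => rfl
  have chead : ∀ e' : G.ContractedE (G.verts C), (G.contract (G.verts C)).head e'
      = if h : G.head e'.1 ∈ G.verts C then none else some ⟨G.head e'.1, h⟩ := fun _ => rfl
  have hvalC : ∀ e' : G.ContractedE (G.verts C), e'.1 ∉ C := by
    intro e' hmem'
    rcases e'.2 with h | h
    · exact h (htailA _ hmem')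
    · exact h (hheadA _ hmem')
  have hnone_ne_bd' : (none : Option {v : V // v ∉ G.verts C}) ≠ some ⟨bd, hbd⟩ := by simp
  have hfnone : (G.contract (G.verts C)).tail f = none := by rw [ctail, dif_pos hf]
  have huniq_none : ∀ e' ∈ T', G.tail e'.1 ∈ G.verts C → e' = f := by
    intro e' he' h
    obtain ⟨u, _, hu⟩ := hT'out none hnone_ne_bd'
    rw [hu e' ⟨he', by rw [ctail, dif_pos h]⟩, hu f ⟨hfT, hfnone⟩]
  have hheadf : G.head f.1 ∉ G.verts C := by
    rcases f.2 with h | h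
    · exact absurd hf h
    · exact h
  -- membership in T
  have hCT : ∀ e ∈ C, e ≠ eC → e ∈ T := fun e he hne => ⟨Or.inl he, hne⟩
  have hT'T : ∀ e' ∈ T', e'.1 ∈ T := by
    intro e' he'
    refine ⟨Or.inr ⟨e', he', rfl⟩, ?_⟩
    intro hx
    rw [Set.mem_singleton_iff] at hx
    exact hvalC e' (by rw [hx]; exact heC)
  -- out-degrees of T
  have hTout : ∀ v, v ≠ bd → ∃! e, e ∈ T ∧ G.tail e = v := by
    intro v hv
    by_cases hvA : v ∈ G.verts C
    · by_cases hveq : v = G.tail eC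
      · -- v = tail eC = tail f.1 : witness f.1
        refine ⟨f.1, ⟨hT'T f hfT, by rw [← heCf, ← hveq]⟩, ?_⟩
        rintro e ⟨⟨he, hne⟩, hte⟩
        rcases he with hc | ⟨e', he', rfl⟩
        · obtain ⟨i, rfl⟩ := hidx e hc
          have : i = i0 := htinj (show G.tail (c i) = G.tail (c i0) by
            rw [hte, hi0, hveq])
          exact absurd (by rw [this, hi0] : c i = eC) (by simpa using hne)
        · rw [huniq_none e' he' (by rw [hte]; exact hvA)]
      · -- v ∈ A, v ≠ tail eC : witness the C-edge out of v
        obtain ⟨i, hi⟩ := hAtail v hvA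
        have hine : c i ≠ eC := by
          intro hx
          exact hveq (by rw [← hi, hx])
        refine ⟨c i, ⟨hCT _ (hmemC i) hine, hi⟩, ?_⟩
        rintro e ⟨⟨he, hne⟩, hte⟩
        rcases he with hc | ⟨e', he', rfl⟩
        · obtain ⟨j, rfl⟩ := hidx e hc
          have : j = i := htinj (show G.tail (c j) = G.tail (c i) by rw [hte, hi])
          rw [this]
        · exfalso
          have := huniq_none e' he' (by rw [hte]; exact hvA)
          rw [this] at hte
          exact hveq (by rw [← hte, heCf])
    · -- v ∉ A : witness from T'
      have hvne : (some ⟨v, hvA⟩ : Option {x : V // x ∉ G.verts C}) ≠ some ⟨bd, hbd⟩ := by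
        simp only [ne_eq, Option.some.injEq, Subtype.mk.injEq]
        exact hv
      obtain ⟨e', ⟨he'T, he't⟩, hu⟩ := hT'out (some ⟨v, hvA⟩) hvne
      have h1 : G.tail e'.1 ∉ G.verts C := by
        intro hx
        rw [ctail, dif_pos hx] at he't
        exact nomatch he't
      have h2 : G.tail e'.1 = v := by
        rw [ctail, dif_neg h1] at he't
        have := Option.some_injective _ he't
        exact congrArg Subtype.val this
      refine ⟨e'.1, ⟨hT'T e' he'T, h2⟩, ?_⟩
      rintro e ⟨⟨he, hne⟩, hte⟩
      rcases he with hc | ⟨e'', he'', rfl⟩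
      · exact absurd (by rw [← hte]; exact htailA e hc) hvA
      · have h3 : G.tail e''.1 ∉ G.verts C := by rw [hte]; exact hvA
        have : e'' = e' := hu e'' ⟨he'', by
          rw [ctail, dif_neg h3]
          congr 1
          exact Subtype.ext hte⟩
        rw [this]
  -- no T-edge leaves bd
  have hTbd : ∀ e ∈ T, G.tail e ≠ bd := by
    rintro e ⟨he, -⟩ hte
    rcases he with hc | ⟨e', he', rfl⟩
    · exact hbd (by rw [← hte]; exact htailA e hc)
    · have h1 : G.tail e'.1 ∉ G.verts C := by rw [hte]; exact hbd
      refine hT'bd e' he' ?_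
      rw [ctail, dif_neg h1]
      congr 1
      exact Subtype.ext hte
  -- reachability in T
  have L1 : ∀ i, Relation.ReflTransGen (G.Step T) (G.tail (c i)) (G.tail (c i0)) :=
    G.cwalk hn c hhd T i0 (fun i hi => hCT _ (hmemC i)
      (fun hx => hi (hcinj (by rw [hx, hi0]))))
  have RT' := (G.contract (G.verts C)).reach_of_arb (some ⟨bd, hbd⟩) T'
    ⟨hT'out, hT'bd, hT'nc⟩
  have L2 : ∀ v', Relation.ReflTransGen ((G.contract (G.verts C)).Step T') v'
        (some ⟨bd, hbd⟩) →
      (∀ (v : V) (h : v ∉ G.verts C), v' = some ⟨v, h⟩ →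
        Relation.ReflTransGen (G.Step T) v bd) ∧
      (v' = none → ∀ a ∈ G.verts C, Relation.ReflTransGen (G.Step T) a bd) := by
    intro v' hv'
    induction hv' using Relation.ReflTransGen.head_induction_on with
    | refl =>
      constructor
      · intro v h hv
        have : bd = v := by
          have := Option.some_injective _ hv
          exact congrArg Subtype.val this
        rw [← this]
      · intro h; exact absurd h (by simp)
    | head hstep hrest ih =>
      obtain ⟨e', he'T, hte', hhe'⟩ := hstep
      constructor
      · intro v h hv
        rw [hv] at hte'
        have h1 : G.tail e'.1 ∉ G.verts C := by
          intro hx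
          rw [ctail, dif_pos hx] at hte'
          exact nomatch hte'
        have h2 : G.tail e'.1 = v := by
          rw [ctail, dif_neg h1] at hte'
          exact congrArg Subtype.val (Option.some_injective _ hte')
        by_cases h3 : G.head e'.1 ∈ G.verts C
        · have hb : (G.contract (G.verts C)).head e' = none := by
            rw [chead, dif_pos h3]
          rw [hb] at hhe'
          exact Relation.ReflTransGen.head ⟨e'.1, hT'T e' he'T, h2, rfl⟩
            (ih.2 hhe'.symm _ h3)
        · have hb : (G.contract (G.verts C)).head e' = some ⟨G.head e'.1, h3⟩ := by
            rw [chead, dif_neg h3]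
          rw [hb] at hhe'
          exact Relation.ReflTransGen.head ⟨e'.1, hT'T e' he'T, h2, rfl⟩
            (ih.1 _ h3 hhe'.symm)
      · intro hv
        rw [hv] at hte'
        have h1 : G.tail e'.1 ∈ G.verts C := by
          by_contra hx
          rw [ctail, dif_neg hx] at hte'
          exact nomatch hte'
        have hef : e' = f := huniq_none e' he'T h1
        intro a ha
        obtain ⟨i, hi⟩ := hAtail a ha
        have walk : Relation.ReflTransGen (G.Step T) a (G.tail eC) := by
          rw [← hi, ← hi0]; exact L1 i
        have hb : (G.contract (G.verts C)).head e' = some ⟨G.head f.1, hheadf⟩ := by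
          rw [hef, chead, dif_neg hheadf]
        rw [hb] at hhe'
        have htail_reach : Relation.ReflTransGen (G.Step T) (G.head f.1) bd :=
          ih.1 _ hheadf hhe'.symm
        exact walk.trans (Relation.ReflTransGen.head
          ⟨f.1, hT'T f hfT, heCf.symm, rfl⟩ htail_reach)
  have RT : ∀ v, Relation.ReflTransGen (G.Step T) v bd := by
    intro v
    by_cases hvA : v ∈ G.verts C
    · exact (L2 none (RT' none)).2 rfl v hvA
    · exact (L2 (some ⟨v, hvA⟩) (RT' _)).1 v hvA rfl
  have hTnc : ¬ G.HasCycleIn T :=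
    G.noCycle_of_reach bd T (G.uniq_out hTout hTbd) hTbd RT
  refine ⟨⟨hTout, hTbd, hTnc⟩, ?_⟩
  -- minimality
  intro S hS
  obtain ⟨hSout, hSbd, hSnc⟩ := hS
  have RS := G.reach_of_arb bd S ⟨hSout, hSbd, hSnc⟩
  set SNA : Set E := {e ∈ S | G.tail e ∉ G.verts C} with hSNAdef
  have good : ∃ es ∈ S, G.tail es ∈ G.verts C ∧
      Relation.ReflTransGen (G.Step SNA) (G.head es) bd := by
    have key : ∀ v, Relation.ReflTransGen (G.Step S) v bd →
        (Relation.ReflTransGen (G.Step SNA) v bd ∨ ∃ es ∈ S, G.tail es ∈ G.verts C ∧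
          Relation.ReflTransGen (G.Step SNA) (G.head es) bd) := by
      intro v hv
      induction hv using Relation.ReflTransGen.head_induction_on with
      | refl => exact Or.inl Relation.ReflTransGen.refl
      | head hstep hrest ih =>
        rcases ih with hra | hgood
        · obtain ⟨e, heS, hte, hhe⟩ := hstep
          by_cases hA' : G.tail e ∈ G.verts C
          · exact Or.inr ⟨e, heS, hA', by rw [hhe]; exact hra⟩
          · exact Or.inl (Relation.ReflTransGen.head ⟨e, ⟨heS, hA'⟩, hte, hhe⟩ hra)
        · exact Or.inr hgood
    have ha0 : G.tail (c 0) ∈ G.verts C := htailA _ (hmemC 0)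
    rcases key _ (RS (G.tail (c 0))) with hra | hgood
    · exfalso
      rcases hra.cases_head with heq | ⟨u, ⟨e, ⟨_, hnA⟩, hte, _⟩, _⟩
      · exact hbd (by rw [← heq]; exact ha0)
      · exact hnA (by rw [hte]; exact ha0)
    · exact hgood
  obtain ⟨es, hesS, hesA, hesRA⟩ := good
  have hheades : G.head es ∉ G.verts C := by
    rcases hesRA.cases_head with heq | ⟨u, ⟨e, ⟨_, hnA⟩, hte, _⟩, _⟩
    · rw [heq]; exact hbd
    · rw [← hte]; exact hnA
  obtain ⟨istar, histar⟩ := hAtail _ hesA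
  set Stil : Set E := ({e ∈ S | G.tail e ∉ G.verts C} ∪ {es}) ∪ (C \ {c istar})
    with hStildef
  have hStil_es : es ∈ Stil := Or.inl (Or.inr rfl)
  have hStilout : ∀ v, v ≠ bd → ∃! e, e ∈ Stil ∧ G.tail e = v := by
    intro v hv
    by_cases hvA : v ∈ G.verts C
    · by_cases hveq : v = G.tail es
      · refine ⟨es, ⟨hStil_es, hveq.symm⟩, ?_⟩
        rintro e ⟨he, hte⟩
        rcases he with (⟨-, hnA⟩ | he) | ⟨hc, hne⟩
        · exact absurd (by rw [hte]; exact hvA) hnA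
        · exact he
        · exfalso
          obtain ⟨j, rfl⟩ := hidx e hc
          have : j = istar := htinj (show G.tail (c j) = G.tail (c istar) by
            rw [hte, histar, hveq])
          exact hne (by rw [this]; exact rfl)
      · obtain ⟨i, hi⟩ := hAtail v hvA
        have hine : c i ≠ c istar := by
          intro hx
          exact hveq (by rw [← hi, hx, histar])
        refine ⟨c i, ⟨Or.inr ⟨hmemC i, hine⟩, hi⟩, ?_⟩
        rintro e ⟨he, hte⟩
        rcases he with (⟨-, hnA⟩ | he) | ⟨hc, hne⟩
        · exact absurd (by rw [hte]; exact hvA) hnA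
        · exfalso; rw [Set.mem_singleton_iff] at he
          exact hveq (by rw [← hte, he])
        · obtain ⟨j, rfl⟩ := hidx e hc
          have : j = i := htinj (show G.tail (c j) = G.tail (c i) by rw [hte, hi])
          rw [this]
    · obtain ⟨e, ⟨heS, hte⟩, hu⟩ := hSout v hv
      have henA : G.tail e ∉ G.verts C := by rw [hte]; exact hvA
      refine ⟨e, ⟨Or.inl (Or.inl ⟨heS, henA⟩), hte⟩, ?_⟩
      rintro e₂ ⟨he₂, hte₂⟩
      rcases he₂ with (⟨hS₂, -⟩ | he₂) | ⟨hc, -⟩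
      · exact hu e₂ ⟨hS₂, hte₂⟩
      · exfalso; rw [Set.mem_singleton_iff] at he₂
        exact hvA (by rw [← hte₂, he₂]; exact hesA)
      · exact absurd (by rw [← hte₂]; exact htailA e₂ hc) hvA
  have hStilbd : ∀ e ∈ Stil, G.tail e ≠ bd := by
    rintro e ((⟨heS, -⟩ | he) | ⟨hc, -⟩)
    · exact hSbd e heS
    · rw [Set.mem_singleton_iff] at he; rw [he]; exact hSbd es hesS
    · intro hx; exact hbd (by rw [← hx]; exact htailA e hc)
  have hSNAsub : SNA ⊆ Stil := fun e he => Or.inl (Or.inl he)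
  have hreach_es : Relation.ReflTransGen (G.Step Stil) (G.head es) bd :=
    G.reach_mono hSNAsub hesRA
  have hreach_tes : Relation.ReflTransGen (G.Step Stil) (G.tail (c istar)) bd :=
    Relation.ReflTransGen.head ⟨es, hStil_es, histar.symm, rfl⟩ hreach_es
  have hwalkS : ∀ i, Relation.ReflTransGen (G.Step Stil) (G.tail (c i))
      (G.tail (c istar)) :=
    G.cwalk hn c hhd Stil istar (fun i hi => Or.inr ⟨hmemC i,
      fun hx => hi (hcinj (by rw [Set.mem_singleton_iff] at hx; exact hx))⟩)
  have hreachA : ∀ v ∈ G.verts C, Relation.ReflTransGen (G.Step Stil) v bd := by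
    intro v hvA
    obtain ⟨i, hi⟩ := hAtail v hvA
    exact (by rw [← hi]; exact (hwalkS i).trans hreach_tes)
  have RStil : ∀ v, Relation.ReflTransGen (G.Step Stil) v bd := by
    intro v
    have hv := RS v
    induction hv using Relation.ReflTransGen.head_induction_on with
    | refl => exact Relation.ReflTransGen.refl
    | head hstep hrest ih =>
      obtain ⟨e, heS, hte, hhe⟩ := hstep
      by_cases hA' : G.tail e ∈ G.verts C
      · exact hreachA _ (by rw [← hte]; exact hA')
      · exact Relation.ReflTransGen.head ⟨e, Or.inl (Or.inl ⟨heS, hA'⟩), hte, hhe⟩ ih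
  have hStilnc : ¬ G.HasCycleIn Stil :=
    G.noCycle_of_reach bd Stil (G.uniq_out hStilout hStilbd) hStilbd RStil
  -- the contracted arborescence
  set S' : Set (G.ContractedE (G.verts C)) := {e' | e'.1 ∈ Stil} with hS'def
  have hes'mem : (⟨es, Or.inr hheades⟩ : G.ContractedE (G.verts C)) ∈ S' := hStil_es
  have hS'out : ∀ v', v' ≠ some ⟨bd, hbd⟩ →
      ∃! e', e' ∈ S' ∧ (G.contract (G.verts C)).tail e' = v' := by
    intro v' hv'
    match v' with
    | none =>
      refine ⟨⟨es, Or.inr hheades⟩, ⟨hes'mem, by rw [ctail]; exact dif_pos hesA⟩, ?_⟩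
      rintro e' ⟨he', hte'⟩
      have h1 : G.tail e'.1 ∈ G.verts C := by
        by_contra hx
        rw [ctail, dif_neg hx] at hte'
        exact nomatch hte'
      have h2 : e'.1 = es := by
        rcases he' with (⟨-, hnA⟩ | he) | ⟨hc, -⟩
        · exact absurd h1 hnA
        · rwa [Set.mem_singleton_iff] at he
        · exact absurd hc (hvalC e')
      exact Subtype.ext h2
    | some ⟨v, hvnA⟩ =>
      have hvbd : v ≠ bd := by
        intro hx
        exact hv' (by rw [Option.some_inj]; exact Subtype.ext hx)
      obtain ⟨e, ⟨heStil, hte⟩, hu⟩ := hStilout v hvbd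
      have henA : G.tail e ∉ G.verts C := by rw [hte]; exact hvnA
      refine ⟨⟨e, Or.inl henA⟩, ⟨heStil, by
        rw [ctail, dif_neg henA]; exact congrArg some (Subtype.ext hte)⟩, ?_⟩
      rintro e' ⟨he', hte'⟩
      have h1 : G.tail e'.1 ∉ G.verts C := by
        intro hx
        rw [ctail, dif_pos hx] at hte'
        exact nomatch hte'
      have h2 : G.tail e'.1 = v := by
        rw [ctail, dif_neg h1] at hte'
        exact congrArg Subtype.val (Option.some_injective _ hte')
      exact Subtype.ext (hu e'.1 ⟨he', h2⟩)
  have hS'bd : ∀ e' ∈ S', (G.contract (G.verts C)).tail e' ≠ some ⟨bd, hbd⟩ := by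
    intro e' he' hx
    have h1 : G.tail e'.1 ∉ G.verts C := by
      by_contra hy
      rw [ctail, dif_pos hy] at hx
      exact nomatch hx
    rw [ctail, dif_neg h1] at hx
    have : G.tail e'.1 = bd := congrArg Subtype.val (Option.some_injective _ hx)
    exact hStilbd e'.1 he' this
  have hpi : ∀ u, Relation.ReflTransGen (G.Step Stil) u bd →
      Relation.ReflTransGen ((G.contract (G.verts C)).Step S')
        (if h : u ∈ G.verts C then none else some ⟨u, h⟩) (some ⟨bd, hbd⟩) := by
    intro u hu
    induction hu using Relation.ReflTransGen.head_induction_on with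
    | refl => rw [dif_neg hbd]
    | head hstep hrest ih =>
      obtain ⟨e, heS, hte, hhe⟩ := hstep
      subst hte
      subst hhe
      by_cases h1 : G.tail e ∈ G.verts C <;> by_cases h2 : G.head e ∈ G.verts C
      · rw [dif_pos h1]
        rw [dif_pos h2] at ih
        exact ih
      · exact Relation.ReflTransGen.head
          ⟨⟨e, Or.inr h2⟩, heS, by rw [ctail], by rw [chead]⟩ ih
      · exact Relation.ReflTransGen.head
          ⟨⟨e, Or.inl h1⟩, heS, by rw [ctail], by rw [chead]⟩ ih
      · exact Relation.ReflTransGen.head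
          ⟨⟨e, Or.inl h1⟩, heS, by rw [ctail], by rw [chead]⟩ ih
  have RS' : ∀ v', Relation.ReflTransGen ((G.contract (G.verts C)).Step S') v'
      (some ⟨bd, hbd⟩) := by
    intro v'
    match v' with
    | none =>
      have := hpi (G.tail (c istar)) (RStil _)
      rwa [dif_pos (htailA _ (hmemC istar))] at this
    | some ⟨v, h⟩ =>
      have := hpi v (RStil v)
      rwa [dif_neg h] at this
  have hS'nc : ¬ (G.contract (G.verts C)).HasCycleIn S' :=
    (G.contract (G.verts C)).noCycle_of_reach (some ⟨bd, hbd⟩) S'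
      ((G.contract (G.verts C)).uniq_out hS'out hS'bd) hS'bd RS'
  -- weight comparison
  have hwT : wsum w T = wsum (fun e : G.ContractedE (G.verts C) => w e.1) T' := by
    rw [wsum_subtype]
    unfold wsum
    apply Finset.sum_congr rfl
    intro e _
    by_cases h1 : e ∈ Subtype.val '' T'
    · obtain ⟨e', he', rfl⟩ := h1
      rw [Set.indicator_of_mem (hT'T e' he'), Set.indicator_of_mem (Set.mem_image_of_mem _ he')]
    · rw [Set.indicator_of_notMem h1]
      by_cases h2 : e ∈ T
      · rw [Set.indicator_of_mem h2]
        rcases h2.1 with hc | hi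
        · exact hCw e hc
        · exact absurd hi h1
      · rw [Set.indicator_of_notMem h2]
  have h2 : wsum (fun e : G.ContractedE (G.verts C) => w e.1) T'
      ≤ wsum (fun e : G.ContractedE (G.verts C) => w e.1) S' :=
    hT'min S' ⟨hS'out, hS'bd, hS'nc⟩
  have h3 : wsum (fun e : G.ContractedE (G.verts C) => w e.1) S'
      = wsum w (Subtype.val '' S') := wsum_subtype _ w S'
  have h4 : wsum w (Subtype.val '' S') ≤ wsum w Stil := by
    apply wsum_le_wsum hw0
    rintro e ⟨e', he', rfl⟩
    exact Or.inl he'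
  have h5 : wsum w Stil ≤ wsum w S := by
    apply wsum_le_wsum hw0
    rintro e ((⟨heS, -⟩ | he) | ⟨hc, -⟩)
    · exact Or.inl heS
    · rw [Set.mem_singleton_iff] at he; rw [he]; exact Or.inl hesS
    · exact Or.inr (hCw e hc)
  calc wsum w T = wsum (fun e : G.ContractedE (G.verts C) => w e.1) T' := hwT
    _ ≤ wsum (fun e : G.ContractedE (G.verts C) => w e.1) S' := h2
    _ = wsum w (Subtype.val '' S') := h3
    _ ≤ wsum w Stil := h4
    _ ≤ wsum w S := h5
end

section
/- Fix K > 0 and let g be a probability density on [0,∞) with full support satisfying sup_{u>0, 0<x≤K} g(u−x)/g(u) ≤ C(K) < ∞ for every K ('good' density). Let Z = (Z_1, Z_2, ...) be i.i.d. with density g, let X = (X_1, X_2, ...) be independent of Z with law absolutely continuous with respect to the law of Z, let I = {I_1,...,I_d} ⊆ N be an almost surely finite (possibly empty) set of indices chosen measurably from X, and set X* = max{X_{I_1},...,X_{I_d}}. Define Y_k = 2X* + Z_j if k = I_j for some j, and Y_k = X_k otherwise. Then the law of Y = (Y_k)_{k∈N} is absolutely continuous with respect to the law of Z. -/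
open MeasureTheory ProbabilityTheory

namespace Stmt12

variable {Ω : Type*} [MeasurableSpace Ω]

/-- max over the finset `S` (or `0`). -/
noncomputable def mS (S : Finset ℕ) (x : ℕ → ℝ) : ℝ :=
  if h : S.Nonempty then S.sup' h x else 0

noncomputable def FF (φ : (ℕ → ℝ) → Finset ℕ) (p : (ℕ → ℝ) × (ℕ → ℝ)) : ℕ → ℝ :=
  fun k => if k ∈ φ p.1 then 2 * mS (φ p.1) p.1 + p.2 k else p.1 k

noncomputable def GG (S : Finset ℕ) (p : (ℕ → ℝ) × (ℕ → ℝ)) : ℕ → ℝ :=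
  fun k => if k ∈ S then 2 * mS S p.1 + p.2 k else p.1 k

def TT (S : Finset ℕ) (s : ℝ) (w : ℕ → ℝ) : ℕ → ℝ :=
  fun k => if k ∈ S then s + w k else w k

def EE (q : ℕ → Prop) (w : ℕ → ℝ) :
    ({i // q i} → ℝ) × ({i // ¬ q i} → ℝ) :=
  ((fun i => w i), (fun i => w i))

def EE' (q : ℕ → Prop) [DecidablePred q]
    (ab : ({i // q i} → ℝ) × ({i // ¬ q i} → ℝ)) : ℕ → ℝ :=
  fun j => if h : q j then ab.1 ⟨j, h⟩ else ab.2 ⟨j, h⟩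

noncomputable def mQ (S : Finset ℕ) (a : {i // i ∈ S} → ℝ) : ℝ :=
  mS S (EE' (fun i => i ∈ S) (a, fun _ => 0))

noncomputable def KK (S : Finset ℕ)
    (acb : ({i // i ∈ S} → ℝ) × (({i // i ∈ S} → ℝ) × ({i // ¬ i ∈ S} → ℝ))) :
    ({i // i ∈ S} → ℝ) × ({i // ¬ i ∈ S} → ℝ) :=
  ((fun i => 2 * mQ S acb.1 + acb.2.1 i), acb.2.2)

def LL (S : Finset ℕ) (t : ℝ)
    (cb : ({i // i ∈ S} → ℝ) × ({i // ¬ i ∈ S} → ℝ)) :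
    ({i // i ∈ S} → ℝ) × ({i // ¬ i ∈ S} → ℝ) :=
  ((fun i => t + cb.1 i), cb.2)

def rr (α β : Type*) (pq : (α × β) × (α × β)) : α × (α × β) :=
  (pq.1.1, (pq.2.1, pq.1.2))

lemma measurable_mS (S : Finset ℕ) : Measurable (mS S) := by
  unfold mS
  by_cases h : S.Nonempty
  · simp only [dif_pos h]
    have h2 := Finset.measurable_sup' h (f := fun n (x : ℕ → ℝ) => x n)
      (fun n _ => measurable_pi_apply n)
    have h3 : (fun x : ℕ → ℝ => S.sup' h x) = S.sup' h (fun n (x : ℕ → ℝ) => x n) := by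
      funext x; rw [Finset.sup'_apply]
    rw [h3]; exact h2
  · simp only [dif_neg h]; exact measurable_const

lemma measurable_phi_eq (φ : (ℕ → ℝ) → Finset ℕ)
    (hφ : ∀ n : ℕ, MeasurableSet {x : ℕ → ℝ | n ∈ φ x}) (S : Finset ℕ) :
    MeasurableSet {x : ℕ → ℝ | φ x = S} := by
  have h : {x : ℕ → ℝ | φ x = S} = ⋂ n : ℕ, {x | n ∈ φ x ↔ n ∈ S} := by
    ext x; simp only [Set.mem_setOf_eq, Set.mem_iInter, Finset.ext_iff]
  rw [h]
  refine MeasurableSet.iInter fun n => ?_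
  by_cases hn : n ∈ S
  · simp only [hn, iff_true]; exact hφ n
  · simp only [hn, iff_false]; exact (hφ n).compl

lemma measurable_psi (φ : (ℕ → ℝ) → Finset ℕ)
    (hφ : ∀ n : ℕ, MeasurableSet {x : ℕ → ℝ | n ∈ φ x}) :
    Measurable (fun x : ℕ → ℝ => mS (φ x) x) := by
  intro t ht
  have h : (fun x : ℕ → ℝ => mS (φ x) x) ⁻¹' t
      = ⋃ S : Finset ℕ, ({x : ℕ → ℝ | φ x = S} ∩ mS S ⁻¹' t) := by
    ext x
    simp only [Set.mem_preimage, Set.mem_iUnion, Set.mem_inter_iff, Set.mem_setOf_eq]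
    constructor
    · intro hx; exact ⟨φ x, rfl, hx⟩
    · rintro ⟨S, hS, hx⟩; rw [hS]; exact hx
  rw [h]
  exact MeasurableSet.iUnion fun S => (measurable_phi_eq φ hφ S).inter (measurable_mS S ht)

lemma measurable_FF (φ : (ℕ → ℝ) → Finset ℕ)
    (hφ : ∀ n : ℕ, MeasurableSet {x : ℕ → ℝ | n ∈ φ x}) :
    Measurable (FF φ) := by
  unfold FF
  refine measurable_pi_lambda _ fun k => ?_
  refine Measurable.ite (p := fun p : (ℕ → ℝ) × (ℕ → ℝ) => k ∈ φ p.1) ?_ ?_ ?_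
  · exact measurable_fst (hφ k)
  · exact (((measurable_psi φ hφ).comp measurable_fst).const_mul 2).add
      ((measurable_pi_apply k).comp measurable_snd)
  · exact (measurable_pi_apply k).comp measurable_fst

lemma measurable_GG (S : Finset ℕ) : Measurable (GG S) := by
  unfold GG
  refine measurable_pi_lambda _ fun k => ?_
  by_cases hk : k ∈ S
  · simp only [if_pos hk]
    exact (((measurable_mS S).comp measurable_fst).const_mul 2).add
      ((measurable_pi_apply k).comp measurable_snd)
  · simp only [if_neg hk]
    exact (measurable_pi_apply k).comp measurable_fst

lemma measurable_TT (S : Finset ℕ) (s : ℝ) : Measurable (TT S s) := by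
  unfold TT
  refine measurable_pi_lambda _ fun k => ?_
  by_cases hk : k ∈ S
  · simp only [if_pos hk]; exact measurable_const.add (measurable_pi_apply k)
  · simp only [if_neg hk]; exact measurable_pi_apply k

lemma measurable_EE (q : ℕ → Prop) : Measurable (EE q) :=
  (measurable_pi_lambda _ fun i => measurable_pi_apply _).prodMk
    (measurable_pi_lambda _ fun i => measurable_pi_apply _)

lemma measurable_EE' (q : ℕ → Prop) [DecidablePred q] : Measurable (EE' q) := by
  refine measurable_pi_lambda _ fun j => ?_
  by_cases h : q j
  · simp only [EE', dif_pos h]; exact (measurable_pi_apply _).comp measurable_fst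
  · simp only [EE', dif_neg h]; exact (measurable_pi_apply _).comp measurable_snd

lemma EE'_EE (q : ℕ → Prop) [DecidablePred q] : EE' q ∘ EE q = id := by
  funext w; funext j
  by_cases h : q j <;> simp [EE, EE', h]

lemma measurable_KK (S : Finset ℕ) : Measurable (KK S) := by
  have hm' : Measurable (mQ S) :=
    (measurable_mS S).comp ((measurable_EE' _).comp (measurable_id.prodMk measurable_const))
  exact Measurable.prodMk
    (measurable_pi_lambda _ fun i =>
      ((hm'.comp measurable_fst).const_mul 2).add
        ((measurable_pi_apply i).comp (measurable_fst.comp measurable_snd)))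
    (measurable_snd.comp measurable_snd)

lemma measurable_LL (S : Finset ℕ) (t : ℝ) : Measurable (LL S t) :=
  Measurable.prodMk
    (measurable_pi_lambda _ fun i =>
      Measurable.const_add (f := fun c : ({i // i ∈ S} → ℝ) × ({i // ¬ i ∈ S} → ℝ) => c.1 i)
        ((measurable_pi_apply i).comp measurable_fst) t)
    measurable_snd

lemma measurable_rr (α β : Type*) [MeasurableSpace α] [MeasurableSpace β] :
    Measurable (rr α β) :=
  (measurable_fst.comp measurable_fst).prodMk
    ((measurable_fst.comp measurable_snd).prodMk (measurable_snd.comp measurable_fst))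

lemma comap_restrict_le (Z : ℕ → Ω → ℝ) (q : ℕ → Prop) :
    MeasurableSpace.comap (fun ω (i : {i // q i}) => Z i ω) MeasurableSpace.pi
      ≤ ⨆ i ∈ {i | q i}, MeasurableSpace.comap (Z i) inferInstance := by
  have h1 : (MeasurableSpace.pi : MeasurableSpace ({i // q i} → ℝ))
      = ⨆ i : {i // q i},
          MeasurableSpace.comap (fun a : {i // q i} → ℝ => a i) inferInstance := rfl
  rw [h1, MeasurableSpace.comap_iSup]
  refine iSup_le fun i => ?_
  rw [MeasurableSpace.comap_comp]
  exact le_iSup₂ (f := fun (i : ℕ) (_ : i ∈ {i | q i}) =>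
    MeasurableSpace.comap (Z i) inferInstance) i.1 i.2

lemma block_map (P : Measure Ω) [IsProbabilityMeasure P] (Z : ℕ → Ω → ℝ)
    (hZmeas : ∀ n, Measurable (Z n))
    (hZindep : iIndepFun Z P)
    (q : ℕ → Prop) :
    Measure.map (fun ω => ((fun i : {i // q i} => Z i ω), (fun i : {i // ¬ q i} => Z i ω))) P
      = (Measure.map (fun ω (i : {i // q i}) => Z i ω) P).prod
        (Measure.map (fun ω (i : {i // ¬ q i}) => Z i ω) P) := by
  have h1 : Measurable (fun ω (i : {i // q i}) => Z i ω) :=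
    measurable_pi_lambda _ fun i => hZmeas i
  have h2 : Measurable (fun ω (i : {i // ¬ q i}) => Z i ω) :=
    measurable_pi_lambda _ fun i => hZmeas i
  have hdisj : Disjoint {i : ℕ | q i} {i : ℕ | ¬ q i} := by
    rw [show {i : ℕ | ¬ q i} = {i : ℕ | q i}ᶜ from rfl]
    exact disjoint_compl_right
  have hind : IndepFun (fun ω (i : {i // q i}) => Z i ω)
      (fun ω (i : {i // ¬ q i}) => Z i ω) P := by
    have h := indep_iSup_of_disjoint
      (m := fun i => MeasurableSpace.comap (Z i) inferInstance)
      (fun i => (hZmeas i).comap_le) hZindep hdisj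
    exact indep_of_indep_of_le_left
      (indep_of_indep_of_le_right h (comap_restrict_le Z (fun i => ¬ q i)))
      (comap_restrict_le Z q)
  exact (indepFun_iff_map_prod_eq_prod_map_map h1.aemeasurable h2.aemeasurable).mp hind

lemma map_EE (P : Measure Ω) [IsProbabilityMeasure P] (Z : ℕ → Ω → ℝ)
    (hZmeas : ∀ n, Measurable (Z n))
    (hZindep : iIndepFun Z P)
    (q : ℕ → Prop) :
    Measure.map (EE q) (Measure.map (fun ω (n : ℕ) => Z n ω) P)
      = (Measure.map (fun ω (i : {i // q i}) => Z i ω) P).prod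
        (Measure.map (fun ω (i : {i // ¬ q i}) => Z i ω) P) := by
  rw [Measure.map_map (measurable_EE q) (measurable_pi_lambda _ fun n => hZmeas n)]
  exact block_map P Z hZmeas hZindep q

/-- shift by a nonnegative amount preserves absolute continuity for a good density. -/
lemma shift_ac (g : ℝ → ℝ) (hg0 : ∀ x, 0 ≤ g x) (hgneg : ∀ x < (0 : ℝ), g x = 0)
    (hgood : ∀ K > (0 : ℝ), ∃ C : ℝ,
      ∀ u ∈ Set.Ioi (0 : ℝ), ∀ x ∈ Set.Ioc (0 : ℝ) K, g (u - x) ≤ C * g u)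
    {s : ℝ} (hs : 0 ≤ s) :
    (volume.withDensity (fun x => ENNReal.ofReal (g x))).map (fun t => s + t)
      ≪ volume.withDensity (fun x => ENNReal.ofReal (g x)) := by
  rcases eq_or_lt_of_le hs with rfl | hs'
  · have h : (fun t : ℝ => (0 : ℝ) + t) = id := by funext t; simp
    rw [h, Measure.map_id]
  obtain ⟨C, hC⟩ := hgood s hs'
  refine Measure.AbsolutelyContinuous.mk fun A hA h0 => ?_
  have hmeas : Measurable fun t : ℝ => s + t := measurable_const_add s
  rw [Measure.map_apply hmeas hA, withDensity_apply _ (hmeas hA)]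
  rw [withDensity_apply _ hA] at h0
  have key : ∀ x : ℝ,
      ((fun t => s + t) ⁻¹' A).indicator (fun x => ENNReal.ofReal (g x)) x
        ≤ ENNReal.ofReal (max C 0)
            * A.indicator (fun y => ENNReal.ofReal (g y)) (s + x) := by
    intro x
    by_cases hx : s + x ∈ A
    · rw [Set.indicator_of_mem (by exact hx : x ∈ (fun t => s + t) ⁻¹' A),
        Set.indicator_of_mem hx]
      by_cases hx0 : 0 ≤ x
      · have hu : s + x ∈ Set.Ioi (0 : ℝ) := by
          simp only [Set.mem_Ioi]; linarith
        have hb := hC (s + x) hu s ⟨hs', le_refl s⟩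
        have hgx : g x ≤ max C 0 * g (s + x) := by
          have h2 : g x ≤ C * g (s + x) := by simpa using hb
          calc g x ≤ C * g (s + x) := h2
            _ ≤ max C 0 * g (s + x) :=
              mul_le_mul_of_nonneg_right (le_max_left _ _) (hg0 _)
        calc ENNReal.ofReal (g x) ≤ ENNReal.ofReal (max C 0 * g (s + x)) :=
              ENNReal.ofReal_le_ofReal hgx
          _ = ENNReal.ofReal (max C 0) * ENNReal.ofReal (g (s + x)) :=
              ENNReal.ofReal_mul (le_max_right C 0)
      · have hz : g x = 0 := hgneg x (lt_of_not_ge hx0)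
        simp [hz]
    · rw [Set.indicator_of_notMem (by exact hx : x ∉ (fun t => s + t) ⁻¹' A),
        Set.indicator_of_notMem hx]
      simp
  have hecoe : ⇑(Homeomorph.addLeft s).toMeasurableEquiv = fun x : ℝ => s + x := rfl
  have hvol : Measure.map (fun x : ℝ => s + x) volume = volume :=
    Measure.IsAddLeftInvariant.map_add_left_eq_self s
  refine le_antisymm ?_ (zero_le)
  calc ∫⁻ x in (fun t => s + t) ⁻¹' A, ENNReal.ofReal (g x) ∂volume
      = ∫⁻ x, ((fun t => s + t) ⁻¹' A).indicator (fun x => ENNReal.ofReal (g x)) x ∂volume :=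
        (lintegral_indicator (hmeas hA) _).symm
    _ ≤ ∫⁻ x, ENNReal.ofReal (max C 0)
          * A.indicator (fun y => ENNReal.ofReal (g y)) (s + x) ∂volume :=
        lintegral_mono key
    _ = ENNReal.ofReal (max C 0)
          * ∫⁻ x, A.indicator (fun y => ENNReal.ofReal (g y)) (s + x) ∂volume :=
        lintegral_const_mul' _ _ ENNReal.ofReal_ne_top
    _ = ENNReal.ofReal (max C 0)
          * ∫⁻ y, A.indicator (fun y => ENNReal.ofReal (g y)) y ∂volume := by
        congr 1
        have h1 := lintegral_map_equiv (μ := volume)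
          (A.indicator fun y => ENNReal.ofReal (g y)) (Homeomorph.addLeft s).toMeasurableEquiv
        rw [hecoe, hvol] at h1
        exact h1.symm
    _ = ENNReal.ofReal (max C 0) * ∫⁻ y in A, ENNReal.ofReal (g y) ∂volume := by
        rw [lintegral_indicator hA]
    _ ≤ 0 := by rw [h0, mul_zero]


lemma singleShift_ac (P : Measure Ω) [IsProbabilityMeasure P]
    (g : ℝ → ℝ) (hg0 : ∀ x, 0 ≤ g x) (hgneg : ∀ x < (0 : ℝ), g x = 0)
    (hgood : ∀ K > (0 : ℝ), ∃ C : ℝ,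
      ∀ u ∈ Set.Ioi (0 : ℝ), ∀ x ∈ Set.Ioc (0 : ℝ) K, g (u - x) ≤ C * g u)
    (Z : ℕ → Ω → ℝ) (hZmeas : ∀ n, Measurable (Z n))
    (hZlaw : ∀ n, Measure.map (Z n) P = volume.withDensity (fun x => ENNReal.ofReal (g x)))
    (hZindep : iIndepFun Z P)
    (k : ℕ) {s : ℝ} (hs : 0 ≤ s) :
    Measure.map (TT {k} s) (Measure.map (fun ω (n : ℕ) => Z n ω) P)
      ≪ Measure.map (fun ω (n : ℕ) => Z n ω) P := by
  classical
  have hZm : Measurable (fun ω (n : ℕ) => Z n ω) := measurable_pi_lambda _ fun n => hZmeas n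
  have h1 : Measurable (fun ω (i : {i // i ∈ ({k} : Finset ℕ)}) => Z i ω) :=
    measurable_pi_lambda _ fun i => hZmeas i
  have h2 : Measurable (fun ω (i : {i // ¬ i ∈ ({k} : Finset ℕ)}) => Z i ω) :=
    measurable_pi_lambda _ fun i => hZmeas i
  set ν := volume.withDensity (fun x => ENNReal.ofReal (g x)) with hν
  set μZ := Measure.map (fun ω (n : ℕ) => Z n ω) P with hμZ
  set μ1 := Measure.map (fun ω (i : {i // i ∈ ({k} : Finset ℕ)}) => Z i ω) P with hμ1
  set μ2 := Measure.map (fun ω (i : {i // ¬ i ∈ ({k} : Finset ℕ)}) => Z i ω) P with hμ2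
  haveI : IsProbabilityMeasure μZ := Measure.isProbabilityMeasure_map hZm.aemeasurable
  haveI : IsProbabilityMeasure μ1 := Measure.isProbabilityMeasure_map h1.aemeasurable
  haveI : IsProbabilityMeasure μ2 := Measure.isProbabilityMeasure_map h2.aemeasurable
  haveI hsub : Subsingleton {i // i ∈ ({k} : Finset ℕ)} := ⟨fun a b => Subtype.ext (by
    have ha := a.2; have hb := b.2
    simp only [Finset.mem_singleton] at ha hb
    rw [ha, hb])⟩
  have hE := measurable_EE (fun i => i ∈ ({k} : Finset ℕ))
  have hE' := measurable_EE' (fun i => i ∈ ({k} : Finset ℕ))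
  have hEmap : Measure.map (EE (fun i => i ∈ ({k} : Finset ℕ))) μZ = μ1.prod μ2 :=
    map_EE P Z hZmeas hZindep _
  have hE'map : Measure.map (EE' (fun i => i ∈ ({k} : Finset ℕ))) (μ1.prod μ2) = μZ := by
    rw [← hEmap, Measure.map_map hE' hE, EE'_EE, Measure.map_id]
  -- the shift on the singleton block
  have hψ : Measurable (fun a : {i // i ∈ ({k} : Finset ℕ)} → ℝ =>
      a ⟨k, Finset.mem_singleton_self k⟩) := measurable_pi_apply _
  have hψ' : Measurable (fun (t : ℝ) (_ : {i // i ∈ ({k} : Finset ℕ)}) => t) :=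
    measurable_pi_lambda _ fun _ => measurable_id
  have hshiftmeas : Measurable (fun (a : {i // i ∈ ({k} : Finset ℕ)} → ℝ)
      (i : {i // i ∈ ({k} : Finset ℕ)}) => s + a i) :=
    measurable_pi_lambda _ fun i => measurable_const.add (measurable_pi_apply i)
  have hψmap : Measure.map (fun a : {i // i ∈ ({k} : Finset ℕ)} → ℝ =>
      a ⟨k, Finset.mem_singleton_self k⟩) μ1 = ν := by
    rw [hμ1, Measure.map_map hψ h1]
    exact hZlaw k
  have hcomp1 : (fun (t : ℝ) (_ : {i // i ∈ ({k} : Finset ℕ)}) => t)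
      ∘ (fun a : {i // i ∈ ({k} : Finset ℕ)} → ℝ => a ⟨k, Finset.mem_singleton_self k⟩)
      = id := by
    funext a; funext i
    exact congrArg a (Subsingleton.elim _ _)
  have hfin : Measure.map (fun (t : ℝ) (_ : {i // i ∈ ({k} : Finset ℕ)}) => t) ν = μ1 := by
    rw [← hψmap, Measure.map_map hψ' hψ, hcomp1, Measure.map_id]
  have hshift : Measure.map (fun (a : {i // i ∈ ({k} : Finset ℕ)} → ℝ)
      (i : {i // i ∈ ({k} : Finset ℕ)}) => s + a i) μ1 ≪ μ1 := by
    have hfact : (fun (a : {i // i ∈ ({k} : Finset ℕ)} → ℝ)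
        (i : {i // i ∈ ({k} : Finset ℕ)}) => s + a i)
        = (fun (t : ℝ) (_ : {i // i ∈ ({k} : Finset ℕ)}) => t) ∘ (fun t => s + t)
          ∘ (fun a : {i // i ∈ ({k} : Finset ℕ)} → ℝ => a ⟨k, Finset.mem_singleton_self k⟩) := by
      funext a; funext i
      simp only [Function.comp_apply]
      exact congrArg (fun z => s + z) (congrArg a (Subsingleton.elim _ _))
    rw [hfact, ← Measure.map_map hψ' ((measurable_const_add s).comp hψ),
      ← Measure.map_map (measurable_const_add s) hψ, hψmap, ← hfin]
    exact (shift_ac g hg0 hgneg hgood hs).map hψ'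
  -- conjugate
  have hTfact : TT {k} s = EE' (fun i => i ∈ ({k} : Finset ℕ))
      ∘ (Prod.map (fun (a : {i // i ∈ ({k} : Finset ℕ)} → ℝ)
          (i : {i // i ∈ ({k} : Finset ℕ)}) => s + a i)
          (id : ({i // ¬ i ∈ ({k} : Finset ℕ)} → ℝ) → _))
      ∘ EE (fun i => i ∈ ({k} : Finset ℕ)) := by
    funext w; funext j
    by_cases h : j ∈ ({k} : Finset ℕ)
    · simp [TT, EE, EE', Prod.map, h]
    · simp [TT, EE, EE', Prod.map, h]
  rw [hTfact, ← Measure.map_map hE' ((hshiftmeas.prodMap measurable_id).comp hE),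
    ← Measure.map_map (hshiftmeas.prodMap measurable_id) hE, hEmap,
    ← Measure.map_prod_map _ _ hshiftmeas measurable_id, Measure.map_id, ← hE'map]
  exact ((hshift.prod (Measure.AbsolutelyContinuous.rfl)).map hE')

lemma finsetShift_ac (P : Measure Ω) [IsProbabilityMeasure P]
    (g : ℝ → ℝ) (hg0 : ∀ x, 0 ≤ g x) (hgneg : ∀ x < (0 : ℝ), g x = 0)
    (hgood : ∀ K > (0 : ℝ), ∃ C : ℝ,
      ∀ u ∈ Set.Ioi (0 : ℝ), ∀ x ∈ Set.Ioc (0 : ℝ) K, g (u - x) ≤ C * g u)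
    (Z : ℕ → Ω → ℝ) (hZmeas : ∀ n, Measurable (Z n))
    (hZlaw : ∀ n, Measure.map (Z n) P = volume.withDensity (fun x => ENNReal.ofReal (g x)))
    (hZindep : iIndepFun Z P)
    (S : Finset ℕ) {s : ℝ} (hs : 0 ≤ s) :
    Measure.map (TT S s) (Measure.map (fun ω (n : ℕ) => Z n ω) P)
      ≪ Measure.map (fun ω (n : ℕ) => Z n ω) P := by
  classical
  induction S using Finset.induction_on with
  | empty =>
      have h : TT ∅ s = id := by funext w j; simp [TT]
      rw [h, Measure.map_id]
  | @insert k S hk ih =>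
      have hcomp : TT (insert k S) s = TT {k} s ∘ TT S s := by
        funext w j
        by_cases h1 : j = k
        · subst h1
          simp [TT, hk]
        · by_cases h2 : j ∈ S <;>
            simp [TT, Finset.mem_insert, Finset.mem_singleton, h1, h2]
      rw [hcomp, ← Measure.map_map (measurable_TT {k} s) (measurable_TT S s)]
      exact (ih.map (measurable_TT {k} s)).trans
        (singleShift_ac P g hg0 hgneg hgood Z hZmeas hZlaw hZindep k hs)

lemma key_S (P : Measure Ω) [IsProbabilityMeasure P]
    (g : ℝ → ℝ) (hg0 : ∀ x, 0 ≤ g x) (hgneg : ∀ x < (0 : ℝ), g x = 0)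
    (hgood : ∀ K > (0 : ℝ), ∃ C : ℝ,
      ∀ u ∈ Set.Ioi (0 : ℝ), ∀ x ∈ Set.Ioc (0 : ℝ) K, g (u - x) ≤ C * g u)
    (Z : ℕ → Ω → ℝ) (hZmeas : ∀ n, Measurable (Z n))
    (hZlaw : ∀ n, Measure.map (Z n) P = volume.withDensity (fun x => ENNReal.ofReal (g x)))
    (hZindep : iIndepFun Z P)
    (S : Finset ℕ) {A : Set (ℕ → ℝ)} (hA : MeasurableSet A)
    (h0 : Measure.map (fun ω (n : ℕ) => Z n ω) P A = 0) :
    ((Measure.map (fun ω (n : ℕ) => Z n ω) P).prod (Measure.map (fun ω (n : ℕ) => Z n ω) P))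
      (GG S ⁻¹' A) = 0 := by
  classical
  have hZm : Measurable (fun ω (n : ℕ) => Z n ω) := measurable_pi_lambda _ fun n => hZmeas n
  have h1 : Measurable (fun ω (i : {i // i ∈ S}) => Z i ω) :=
    measurable_pi_lambda _ fun i => hZmeas i
  have h2 : Measurable (fun ω (i : {i // ¬ i ∈ S}) => Z i ω) :=
    measurable_pi_lambda _ fun i => hZmeas i
  set ν := volume.withDensity (fun x => ENNReal.ofReal (g x)) with hν
  set μZ := Measure.map (fun ω (n : ℕ) => Z n ω) P with hμZ
  set μ1 := Measure.map (fun ω (i : {i // i ∈ S}) => Z i ω) P with hμ1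
  set μ2 := Measure.map (fun ω (i : {i // ¬ i ∈ S}) => Z i ω) P with hμ2
  haveI : IsProbabilityMeasure μZ := Measure.isProbabilityMeasure_map hZm.aemeasurable
  haveI : IsProbabilityMeasure μ1 := Measure.isProbabilityMeasure_map h1.aemeasurable
  haveI : IsProbabilityMeasure μ2 := Measure.isProbabilityMeasure_map h2.aemeasurable
  have hE := measurable_EE (fun i => i ∈ S)
  have hE' := measurable_EE' (fun i => i ∈ S)
  have hEmap : Measure.map (EE (fun i => i ∈ S)) μZ = μ1.prod μ2 :=
    map_EE P Z hZmeas hZindep _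
  have hE'map : Measure.map (EE' (fun i => i ∈ S)) (μ1.prod μ2) = μZ := by
    rw [← hEmap, Measure.map_map hE' hE, EE'_EE, Measure.map_id]
  have hA' : MeasurableSet (EE' (fun i => i ∈ S) ⁻¹' A) := hE' hA
  have hA'0 : (μ1.prod μ2) (EE' (fun i => i ∈ S) ⁻¹' A) = 0 := by
    rw [← Measure.map_apply hE' hA, hE'map]; exact h0
  -- a.e. nonnegativity of coordinates
  have hνIio : ν (Set.Iio 0) = 0 := by
    rw [hν, withDensity_apply _ measurableSet_Iio]
    have hz : ∀ᵐ x ∂(volume.restrict (Set.Iio (0 : ℝ))), ENNReal.ofReal (g x) = 0 :=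
      (ae_restrict_iff' measurableSet_Iio).2 (Filter.Eventually.of_forall fun x hx => by
        simp [hgneg x hx])
    rw [lintegral_congr_ae hz, lintegral_zero]
  have hmeasset : MeasurableSet {a : {i // i ∈ S} → ℝ | ∀ i, 0 ≤ a i} := by
    have h : {a : {i // i ∈ S} → ℝ | ∀ i, 0 ≤ a i} = ⋂ i, {a | 0 ≤ a i} := by
      ext a; simp
    rw [h]
    exact MeasurableSet.iInter fun i => measurableSet_le measurable_const (measurable_pi_apply i)
  have hae1 : ∀ᵐ a ∂μ1, ∀ i : {i // i ∈ S}, 0 ≤ a i := by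
    rw [hμ1, ae_map_iff h1.aemeasurable hmeasset, ae_all_iff]
    intro i
    have hzero : P (Z i ⁻¹' Set.Iio 0) = 0 := by
      rw [← Measure.map_apply (hZmeas i) measurableSet_Iio, hZlaw i]
      exact hνIio
    rw [ae_iff, show {ω | ¬ (0 : ℝ) ≤ Z (i : ℕ) ω} = Z (i : ℕ) ⁻¹' Set.Iio 0 from by
      ext ω; simp [not_le]]
    exact hzero
  have hae2 : ∀ᵐ a ∂μ1, 0 ≤ mQ S a := by
    filter_upwards [hae1] with a ha
    unfold mQ mS
    by_cases h : S.Nonempty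
    · rw [dif_pos h]
      have h' := h
      obtain ⟨k0, hk0⟩ := h'
      refine le_trans ?_ (Finset.le_sup' _ hk0)
      simp only [EE', dif_pos hk0]
      exact ha ⟨k0, hk0⟩
    · rw [dif_neg h]
  -- factorization of GG S
  have hm'eq : ∀ ab : ({i // i ∈ S} → ℝ) × ({i // ¬ i ∈ S} → ℝ),
      mS S (EE' (fun i => i ∈ S) ab) = mQ S ab.1 := by
    rintro ⟨a, b⟩
    unfold mQ mS
    by_cases h : S.Nonempty
    · rw [dif_pos h, dif_pos h]
      refine Finset.sup'_congr h rfl fun j hj => ?_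
      simp [EE', hj]
    · rw [dif_neg h, dif_neg h]
  have hGfact : GG S ∘ Prod.map (EE' (fun i => i ∈ S)) (EE' (fun i => i ∈ S))
      = EE' (fun i => i ∈ S) ∘ KK S ∘ rr ({i // i ∈ S} → ℝ) ({i // ¬ i ∈ S} → ℝ) := by
    funext pq; funext j
    by_cases h : j ∈ S
    · simp only [Function.comp_apply, GG, Prod.map_fst, Prod.map_snd, if_pos h]
      rw [hm'eq pq.1]
      simp only [EE', KK, rr, dif_pos h]
    · simp only [Function.comp_apply, GG, Prod.map_fst, Prod.map_snd, if_neg h]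
      simp only [EE', KK, rr, dif_neg h]
  have hGmeas := measurable_GG S
  have hrr := measurable_rr ({i // i ∈ S} → ℝ) ({i // ¬ i ∈ S} → ℝ)
  have hK := measurable_KK S
  have hstep1 : μZ.prod μZ
      = Measure.map (Prod.map (EE' (fun i => i ∈ S)) (EE' (fun i => i ∈ S)))
          ((μ1.prod μ2).prod (μ1.prod μ2)) := by
    rw [← hE'map]
    exact Measure.map_prod_map _ _ hE' hE'
  have hrrfact : rr ({i // i ∈ S} → ℝ) ({i // ¬ i ∈ S} → ℝ)
      = (Prod.map (id : ({i // i ∈ S} → ℝ) → _) Prod.swap) ∘ ⇑MeasurableEquiv.prodAssoc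
        ∘ (Prod.map (id : (({i // i ∈ S} → ℝ) × ({i // ¬ i ∈ S} → ℝ)) → _) Prod.fst) := rfl
  have hs1 : Measure.map
      (Prod.map (id : (({i // i ∈ S} → ℝ) × ({i // ¬ i ∈ S} → ℝ)) → _) Prod.fst)
      ((μ1.prod μ2).prod (μ1.prod μ2)) = (μ1.prod μ2).prod μ1 := by
    rw [← Measure.map_prod_map _ _ measurable_id measurable_fst, Measure.map_id,
      Measure.map_fst_prod]
    simp
  have hs2 : Measure.map (⇑MeasurableEquiv.prodAssoc) ((μ1.prod μ2).prod μ1)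
      = μ1.prod (μ2.prod μ1) := Measure.prodAssoc_prod
  have hs3 : Measure.map (Prod.map (id : ({i // i ∈ S} → ℝ) → _) Prod.swap)
      (μ1.prod (μ2.prod μ1)) = μ1.prod (μ1.prod μ2) := by
    rw [← Measure.map_prod_map _ _ measurable_id measurable_swap, Measure.map_id,
      Measure.prod_swap]
  have hrrmap : Measure.map (rr ({i // i ∈ S} → ℝ) ({i // ¬ i ∈ S} → ℝ))
      ((μ1.prod μ2).prod (μ1.prod μ2)) = μ1.prod (μ1.prod μ2) := by
    rw [hrrfact,
      ← Measure.map_map (measurable_id.prodMap measurable_swap)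
        (MeasurableEquiv.prodAssoc.measurable.comp (measurable_id.prodMap measurable_fst)),
      ← Measure.map_map MeasurableEquiv.prodAssoc.measurable
        (measurable_id.prodMap measurable_fst),
      hs1, hs2, hs3]
  have hintzero : ∀ᵐ a ∂μ1,
      (μ1.prod μ2) (Prod.mk a ⁻¹' (KK S ⁻¹' (EE' (fun i => i ∈ S) ⁻¹' A))) = 0 := by
    filter_upwards [hae2] with a ha
    have hset : Prod.mk a ⁻¹' (KK S ⁻¹' (EE' (fun i => i ∈ S) ⁻¹' A))
        = LL S (2 * mQ S a) ⁻¹' (EE' (fun i => i ∈ S) ⁻¹' A) := rfl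
    rw [hset, ← Measure.map_apply (measurable_LL S _) hA']
    have hLE : LL S (2 * mQ S a) ∘ EE (fun i => i ∈ S)
        = EE (fun i => i ∈ S) ∘ TT S (2 * mQ S a) := by
      funext w
      refine Prod.ext ?_ ?_
      · funext i; simp [LL, EE, TT, i.2]
      · funext i; simp [LL, EE, TT, i.2]
    have hac : Measure.map (LL S (2 * mQ S a)) (μ1.prod μ2) ≪ μ1.prod μ2 := by
      rw [← hEmap, Measure.map_map (measurable_LL S _) hE, hLE,
        ← Measure.map_map hE (measurable_TT S _)]
      exact (finsetShift_ac P g hg0 hgneg hgood Z hZmeas hZlaw hZindep S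
        (mul_nonneg (by norm_num) ha)).map hE
    exact hac hA'0
  calc (μZ.prod μZ) (GG S ⁻¹' A)
      = ((μ1.prod μ2).prod (μ1.prod μ2))
          (Prod.map (EE' (fun i => i ∈ S)) (EE' (fun i => i ∈ S)) ⁻¹' (GG S ⁻¹' A)) := by
        rw [hstep1, Measure.map_apply (hE'.prodMap hE') (hGmeas hA)]
    _ = (Measure.map (rr ({i // i ∈ S} → ℝ) ({i // ¬ i ∈ S} → ℝ))
          ((μ1.prod μ2).prod (μ1.prod μ2)))
          (KK S ⁻¹' (EE' (fun i => i ∈ S) ⁻¹' A)) := by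
        rw [Measure.map_apply hrr (hK hA')]
        congr 1
        rw [show Prod.map (EE' (fun i => i ∈ S)) (EE' (fun i => i ∈ S)) ⁻¹' (GG S ⁻¹' A)
          = (GG S ∘ Prod.map (EE' (fun i => i ∈ S)) (EE' (fun i => i ∈ S))) ⁻¹' A from rfl,
          hGfact]
        rfl
    _ = (μ1.prod (μ1.prod μ2)) (KK S ⁻¹' (EE' (fun i => i ∈ S) ⁻¹' A)) := by rw [hrrmap]
    _ = ∫⁻ a, (μ1.prod μ2) (Prod.mk a ⁻¹' (KK S ⁻¹' (EE' (fun i => i ∈ S) ⁻¹' A))) ∂μ1 :=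
        Measure.prod_apply (hK hA')
    _ = 0 := by rw [lintegral_congr_ae hintzero, lintegral_zero]

end Stmt12

/-- Let `g` be a 'good' probability density on `[0,∞)` (full support there,
vanishing on negatives, and for every `K > 0` there is `C(K)` with
`g(u−x) ≤ C(K)·g(u)` for all `u > 0`, `0 < x ≤ K`).  Let `Z = (Z_n)` be i.i.d. with density
`g`, let `X = (X_n)` be independent of `Z` with law absolutely continuous with respect to
the law of `Z`, let `I ⊆ ℕ` be an (automatically a.s. finite) finite set of indices chosen
measurably from `X`, and set `X* = max_{k ∈ I} X_k`.  Define `Y_k = 2X* + Z_k` if `k ∈ I`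
and `Y_k = X_k` otherwise.  Then the law of `Y = (Y_k)` is absolutely continuous with
respect to the law of `Z`. -/
theorem stmt_12 {Ω : Type*} [MeasurableSpace Ω] (P : Measure Ω) [IsProbabilityMeasure P]
    (g : ℝ → ℝ)
    (hg0 : ∀ x, 0 ≤ g x) (hgneg : ∀ x < (0 : ℝ), g x = 0)
    (hgpos : ∀ x, 0 ≤ x → 0 < g x)
    (hgint : ∫ x, g x = 1)
    (hgood : ∀ K > (0 : ℝ), ∃ C : ℝ,
      ∀ u ∈ Set.Ioi (0 : ℝ), ∀ x ∈ Set.Ioc (0 : ℝ) K, g (u - x) ≤ C * g u)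
    (Z X : ℕ → Ω → ℝ)
    (hZmeas : ∀ n, Measurable (Z n)) (hXmeas : ∀ n, Measurable (X n))
    (hZlaw : ∀ n, Measure.map (Z n) P
      = volume.withDensity (fun x => ENNReal.ofReal (g x)))
    (hZindep : iIndepFun Z P)
    (hXZindep : IndepFun (fun ω => fun n => X n ω) (fun ω => fun n => Z n ω) P)
    (hXac : Measure.map (fun ω => fun n => X n ω) P
      ≪ Measure.map (fun ω => fun n => Z n ω) P)
    (φ : (ℕ → ℝ) → Finset ℕ)
    (hφ : ∀ n : ℕ, MeasurableSet {x : ℕ → ℝ | n ∈ φ x})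
    (I : Ω → Finset ℕ) (hI : ∀ ω, I ω = φ (fun n => X n ω))
    (Xstar : Ω → ℝ)
    (hXstar : ∀ ω, Xstar ω
      = if h : (I ω).Nonempty then (I ω).sup' h (fun n => X n ω) else 0)
    (Y : ℕ → Ω → ℝ)
    (hY : ∀ k ω, Y k ω = if k ∈ I ω then 2 * Xstar ω + Z k ω else X k ω) :
    Measure.map (fun ω => fun n => Y n ω) P
      ≪ Measure.map (fun ω => fun n => Z n ω) P := by
  classical
  have hZm : Measurable (fun ω (n : ℕ) => Z n ω) := measurable_pi_lambda _ fun n => hZmeas n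
  have hXm : Measurable (fun ω (n : ℕ) => X n ω) := measurable_pi_lambda _ fun n => hXmeas n
  haveI : IsProbabilityMeasure (Measure.map (fun ω (n : ℕ) => Z n ω) P) :=
    Measure.isProbabilityMeasure_map hZm.aemeasurable
  haveI : IsProbabilityMeasure (Measure.map (fun ω (n : ℕ) => X n ω) P) :=
    Measure.isProbabilityMeasure_map hXm.aemeasurable
  have hFm := Stmt12.measurable_FF φ hφ
  have hYeq : (fun ω => fun n => Y n ω)
      = Stmt12.FF φ ∘ (fun ω => ((fun n => X n ω), (fun n => Z n ω))) := by
    funext ω k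
    show Y k ω = _
    rw [hY k ω]
    simp only [Function.comp_apply, Stmt12.FF, Stmt12.mS]
    rw [hXstar ω]
    simp only [hI ω]
  have hpair : Measure.map (fun ω => ((fun n => X n ω), (fun n => Z n ω))) P
      = (Measure.map (fun ω => fun n => X n ω) P).prod
        (Measure.map (fun ω => fun n => Z n ω) P) :=
    (indepFun_iff_map_prod_eq_prod_map_map hXm.aemeasurable hZm.aemeasurable).mp hXZindep
  have hmain : Measure.map (Stmt12.FF φ)
      ((Measure.map (fun ω => fun n => Z n ω) P).prod (Measure.map (fun ω => fun n => Z n ω) P))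
      ≪ Measure.map (fun ω => fun n => Z n ω) P := by
    refine Measure.AbsolutelyContinuous.mk fun A hA h0 => ?_
    rw [Measure.map_apply hFm hA]
    have hsub : Stmt12.FF φ ⁻¹' A ⊆ ⋃ S : Finset ℕ, Stmt12.GG S ⁻¹' A := fun pq hpq =>
      Set.mem_iUnion.2 ⟨φ pq.1, hpq⟩
    have hkey : ∀ S : Finset ℕ,
        ((Measure.map (fun ω => fun n => Z n ω) P).prod
          (Measure.map (fun ω => fun n => Z n ω) P)) (Stmt12.GG S ⁻¹' A) = 0 := fun S =>
      Stmt12.key_S P g hg0 hgneg hgood Z hZmeas hZlaw hZindep S hA h0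
    refine le_antisymm ?_ (zero_le)
    calc ((Measure.map (fun ω => fun n => Z n ω) P).prod
          (Measure.map (fun ω => fun n => Z n ω) P)) (Stmt12.FF φ ⁻¹' A)
        ≤ ((Measure.map (fun ω => fun n => Z n ω) P).prod
            (Measure.map (fun ω => fun n => Z n ω) P)) (⋃ S : Finset ℕ, Stmt12.GG S ⁻¹' A) :=
          measure_mono hsub
      _ ≤ ∑' S : Finset ℕ, ((Measure.map (fun ω => fun n => Z n ω) P).prod
            (Measure.map (fun ω => fun n => Z n ω) P)) (Stmt12.GG S ⁻¹' A) :=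
          measure_iUnion_le _
      _ = 0 := by simp [hkey]
  rw [hYeq, ← Measure.map_map hFm (hXm.prodMk hZm), hpair]
  exact ((hXac.prod (Measure.AbsolutelyContinuous.rfl)).map hFm).trans hmain
end
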